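/- arXiv:1210.5993 — 2 statements merged into one kernel-verified Lean document; each statement's English description precedes it below -/
import Mathlib

section
/- Let K be a field and n ≥ 1. Let Q be the Kronecker quiver with vertices 1, 2 and two arrows a, b : 1 → 2. Let N be the representation of Q over K with N_1 = K^n with ordered basis u_1 < ... < u_n, N_2 = K^{n+1} with ordered basis v_1 < ... < v_{n+1}, N_a(u_i) = v_i and N_b(u_i) = v_{i+1} for 1 ≤ i ≤ n (a preprojective indecomposable representation of the Kronecker quiver). Then for every dimension vector e = (e_1, e_2) and every subset β of the ordered basis B = {u_1, ..., u_n, v_1, ..., v_{n+1}} of type e, the Schubert cell C_β^N is either empty or in bijection with K^{d_β} for some integer d_β ≥ 0. -/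
open scoped Classical

noncomputable section

namespace QGr

/-- A representation of the quiver with vertex set `V0` and arrow set `A`
(source and target maps are part of the data), given in coordinates with respect to
an ordered basis `B`: the basis element `b : B` sits at the vertex `vtx b`, the space
at the vertex `p` is `{b : B // vtx b = p} → K`, and `mmap a` is the map attached to
the arrow `a`. -/
structure Rep (K : Type) [Field K] (V0 A B : Type) where
  src : A → V0
  tgt : A → V0
  vtx : B → V0
  mmap : ∀ a : A, ({b : B // vtx b = src a} → K) → ({b : B // vtx b = tgt a} → K)

namespace Rep

variable {K : Type} [Field K] {V0 A B : Type}

/-- A collection of subspaces, one at each vertex. -/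
def SubRep (R : Rep K V0 A B) : Type :=
  ∀ p : V0, Submodule K ({b : B // R.vtx b = p} → K)

/-- The collection `W` is a subrepresentation. -/
def IsSubrep (R : Rep K V0 A B) (W : R.SubRep) : Prop :=
  ∀ a : A, ∀ x ∈ W (R.src a), R.mmap a x ∈ W (R.tgt a)

/-- All structure maps are `K`-linear. -/
def Linear (R : Rep K V0 A B) : Prop := ∀ a : A, IsLinearMap K (R.mmap a)

/-- Membership in the Schubert cell attached to `β ⊆ B`: each `W p` is spanned by vectors
`v b₀ = b₀ + ∑ λ_{b',b₀} b'` (`b₀ ∈ β ∩ B_p`), the sum over `b' < b₀` with `b' ∉ β`. -/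
def InCell [LinearOrder B] (R : Rep K V0 A B) (β : Finset B) (W : R.SubRep) : Prop :=
  ∀ p : V0, ∃ v : {b : B // b ∈ β ∧ R.vtx b = p} → ({b : B // R.vtx b = p} → K),
    (∀ b0, v b0 ⟨b0.val, b0.prop.2⟩ = 1) ∧
    (∀ b0 b1, b1.val ≠ b0.val → ¬(b1.val < b0.val ∧ b1.val ∉ β) → v b0 b1 = 0) ∧
    W p = Submodule.span K (Set.range v)

/-- The Schubert cell `C_β^M`. -/
def Cell [LinearOrder B] (R : Rep K V0 A B) (β : Finset B) : Set R.SubRep :=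
  {W | R.IsSubrep W ∧
    (∀ p : V0, Module.finrank K (W p) = (β.filter fun b => R.vtx b = p).card) ∧
    R.InCell β W}

/-- The quiver Grassmannian `Gr_e(M)`. -/
def Gr (R : Rep K V0 A B) (e : V0 → ℕ) : Set R.SubRep :=
  {W | R.IsSubrep W ∧ ∀ p : V0, Module.finrank K (W p) = e p}

/-- Collections of subspaces indexed by the vertices in `S0`. -/
def SubRepOn (R : Rep K V0 A B) (S0 : Set V0) : Type :=
  ∀ p : {p : V0 // p ∈ S0}, Submodule K ({b : B // R.vtx b = ↑p} → K)

/-- Subrepresentation condition over the subquiver `(S0, S1)`. -/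
def IsSubrepOn (R : Rep K V0 A B) (S0 : Set V0) (S1 : Set A) (W : R.SubRepOn S0) : Prop :=
  ∀ a : A, a ∈ S1 → ∀ (h1 : R.src a ∈ S0) (h2 : R.tgt a ∈ S0),
    ∀ x ∈ W ⟨R.src a, h1⟩, R.mmap a x ∈ W ⟨R.tgt a, h2⟩

/-- Cell membership over the vertices in `S0`. -/
def InCellOn [LinearOrder B] (R : Rep K V0 A B) (S0 : Set V0) (β : Finset B)
    (W : R.SubRepOn S0) : Prop :=
  ∀ p : {p : V0 // p ∈ S0},
    ∃ v : {b : B // b ∈ β ∧ R.vtx b = ↑p} → ({b : B // R.vtx b = ↑p} → K),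
      (∀ b0, v b0 ⟨b0.val, b0.prop.2⟩ = 1) ∧
      (∀ b0 b1, b1.val ≠ b0.val → ¬(b1.val < b0.val ∧ b1.val ∉ β) → v b0 b1 = 0) ∧
      W p = Submodule.span K (Set.range v)

/-- The Schubert cell of the restriction of the representation to the subquiver `(S0, S1)`. -/
def CellOn [LinearOrder B] (R : Rep K V0 A B) (S0 : Set V0) (S1 : Set A) (β : Finset B) :
    Set (R.SubRepOn S0) :=
  {W | R.IsSubrepOn S0 S1 W ∧
    (∀ p : {p : V0 // p ∈ S0},
      Module.finrank K (W p) = (β.filter fun b => R.vtx b = ↑p).card) ∧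
    R.InCellOn S0 β W}

/-- The quiver Grassmannian of the restriction to the subquiver `(S0, S1)`. -/
def GrOn (R : Rep K V0 A B) (S0 : Set V0) (S1 : Set A) (e : V0 → ℕ) :
    Set (R.SubRepOn S0) :=
  {W | R.IsSubrepOn S0 S1 W ∧ ∀ p : {p : V0 // p ∈ S0}, Module.finrank K (W p) = e ↑p}

/-- Restriction of a collection of subspaces to the vertices in `S0`. -/
def resOn (R : Rep K V0 A B) (S0 : Set V0) (W : R.SubRep) : R.SubRepOn S0 :=
  fun p => W ↑p

/-- `p < q` for vertices: every basis element at `p` precedes every basis element at `q`. -/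
def vlt [LT B] (R : Rep K V0 A B) (p q : V0) : Prop :=
  ∀ b b' : B, R.vtx b = p → R.vtx b' = q → b < b'

def vle [LT B] (R : Rep K V0 A B) (p q : V0) : Prop := p = q ∨ R.vlt p q

/-- The matrix of `mmap a` with respect to the ordered bases at source and target is a
(square) identity matrix. -/
def IsIdMat [LinearOrder B] (R : Rep K V0 A B) (a : A) : Prop :=
  ∃ e : {b : B // R.vtx b = R.src a} ≃o {b : B // R.vtx b = R.tgt a},
    ∀ i, R.mmap a (Pi.single i 1) = Pi.single (e i) 1

/-- `mmap a` sends the basis vector `b0` to the basis vector `b1`. -/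
def MapsBasisTo (R : Rep K V0 A B) (a : A) (b0 b1 : B) : Prop :=
  ∃ (h0 : R.vtx b0 = R.src a) (h1 : R.vtx b1 = R.tgt a),
    R.mmap a (Pi.single ⟨b0, h0⟩ 1) = Pi.single ⟨b1, h1⟩ 1

/-- The ordered basis `B` is ordered above the subquiver `(S0, S1)`. -/
def OrderedAbove [LinearOrder B] (R : Rep K V0 A B) (S0 : Set V0) (S1 : Set A) : Prop :=
  (∀ b b' : B, R.vtx b ∈ S0 → R.vtx b' ∉ S0 → b < b') ∧
  (∀ p q : V0, p ≠ q → R.vlt p q ∨ R.vlt q p) ∧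
  (∀ (r : ℕ) (pa : Fin (r+1) → V0), pa 0 ∈ S0 → (∀ i, i ≠ 0 → pa i ∉ S0) →
    Function.Injective pa →
    (∀ i : Fin r, ∃ a : A, (R.src a = pa i.castSucc ∧ R.tgt a = pa i.succ) ∨
      (R.src a = pa i.succ ∧ R.tgt a = pa i.castSucc)) →
    ∀ i : Fin r, R.vlt (pa i.castSucc) (pa i.succ)) ∧
  (∀ a : A, a ∉ S1 → R.IsIdMat a)

end Rep

/-- The relation on the vertices of the subquiver with vertex set `T0` identifying all
vertices of `S0` with each other. -/
def treeRel {V0 : Type} (S0 T0 : Set V0) :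
    {v : V0 // v ∈ T0} → {v : V0 // v ∈ T0} → Prop :=
  fun x y => (↑x ∈ S0 ∧ ↑y ∈ S0)

/-- The subquiver `(T0, T1)` is a tree extension of the subquiver `(S0, S1)`:
the quotient quiver `T/S` (arrows of `T` not in `S`; vertices of `T` with all vertices of `S`
identified) is a tree, i.e. it is connected (as an undirected graph) and the number of its
edges is one less than the number of its vertices. -/
def IsTreeExtensionIn {V0 A : Type} (src tgt : A → V0) (T0 : Set V0) (T1 : Set A)
    (S0 : Set V0) (S1 : Set A) : Prop :=
  (∀ u v : Quot (treeRel S0 T0), Relation.ReflTransGen (fun u v =>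
      ∃ a : A, a ∈ T1 ∧ a ∉ S1 ∧ ∃ (hs : src a ∈ T0) (ht : tgt a ∈ T0),
        (Quot.mk (treeRel S0 T0) ⟨src a, hs⟩ = u ∧ Quot.mk (treeRel S0 T0) ⟨tgt a, ht⟩ = v) ∨
        (Quot.mk (treeRel S0 T0) ⟨src a, hs⟩ = v ∧ Quot.mk (treeRel S0 T0) ⟨tgt a, ht⟩ = u))
      u v) ∧
  Nat.card {a : A // a ∈ T1 ∧ a ∉ S1} + 1 = Nat.card (Quot (treeRel S0 T0))

/-- `T` (the full ambient quiver) is a tree extension of the subquiver `(S0, S1)`. -/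
def IsTreeExtension {V0 A : Type} (src tgt : A → V0) (S0 : Set V0) (S1 : Set A) : Prop :=
  IsTreeExtensionIn src tgt Set.univ Set.univ S0 S1

namespace Rep

variable {K : Type} [Field K] {V0 A B QV QA : Type}

/-- The structure map of the push-forward representation `F_*M` attached to the arrow `aq`
of the target quiver. -/
def pushMap [Fintype A] (R : Rep K V0 A B) (qsrc qtgt : QA → QV) (Fv : V0 → QV)
    (Fa : A → QA) (hFs : ∀ a : A, Fv (R.src a) = qsrc (Fa a)) (aq : QA)
    (x : {b : B // Fv (R.vtx b) = qsrc aq} → K) (c : {b : B // Fv (R.vtx b) = qtgt aq}) : K :=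
  ∑ α : A, if hα : Fa α = aq then
    (if hc : R.vtx c.val = R.tgt α then
      R.mmap α (fun b => x ⟨b.val, by rw [b.prop, hFs α, hα]⟩) ⟨c.val, hc⟩
    else 0) else 0

/-- The push-forward representation `F_*M` along the quiver morphism `F = (Fv, Fa)`. -/
def push [Fintype A] (R : Rep K V0 A B) (qsrc qtgt : QA → QV) (Fv : V0 → QV)
    (Fa : A → QA) (hFs : ∀ a : A, Fv (R.src a) = qsrc (Fa a)) : Rep K QV QA B where
  src := qsrc
  tgt := qtgt
  vtx := fun b => Fv (R.vtx b)
  mmap := R.pushMap qsrc qtgt Fv Fa hFs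

/-- The push-forward `F_*V` of a collection of subspaces: at the vertex `q` of `Q` it consists
of all vectors whose component in each `M_p` with `Fv p = q` lies in `V_p`. -/
def pushSub (R : Rep K V0 A B) (Fv : V0 → QV) (W : R.SubRep) :
    ∀ q : QV, Submodule K ({b : B // Fv (R.vtx b) = q} → K) := fun q =>
  { carrier := {x | ∀ (p : V0) (hq : Fv p = q),
      (fun b : {b : B // R.vtx b = p} =>
        x ⟨b.val, by rw [b.prop]; exact hq⟩) ∈ W p}
    add_mem' := fun hx hy p hq => (W p).add_mem (hx p hq) (hy p hq)
    zero_mem' := fun p hq => (W p).zero_mem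
    smul_mem' := fun c x hx p hq => (W p).smul_mem c (hx p hq) }

/-- `reach n p` : there is an (undirected) walk of length `n` from `p` into `S0`. -/
def reach (R : Rep K V0 A B) (S0 : Set V0) : ℕ → V0 → Prop
  | 0, p => p ∈ S0
  | (n+1), p => ∃ a : A, (R.src a = p ∧ R.reach S0 n (R.tgt a)) ∨
      (R.tgt a = p ∧ R.reach S0 n (R.src a))

/-- The graph distance from `p` to the vertex set `S0`. -/
def distS (R : Rep K V0 A B) (S0 : Set V0) (p : V0) : ℕ :=
  sInf {n : ℕ | R.reach S0 n p}

/-- The fibre length `ε(p,p')` of a pair of vertices. -/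
def eps [LT B] (R : Rep K V0 A B) (Fv : V0 → QV) (p p' : V0) : ℕ :=
  Set.ncard {p'' : V0 | Fv p'' = Fv p ∧ R.vle p p'' ∧ R.vlt p'' p'}

/-- Lexicographic comparison `Ψ(p,p') < Ψ(q,q')`. -/
def psiLt [LT B] (R : Rep K V0 A B) (S0 : Set V0) (Fv : V0 → QV) (p p' q q' : V0) : Prop :=
  R.eps Fv p p' < R.eps Fv q q' ∨ (R.eps Fv p p' = R.eps Fv q q' ∧
    (max (R.distS S0 p) (R.distS S0 p') < max (R.distS S0 q) (R.distS S0 q') ∨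
     (max (R.distS S0 p) (R.distS S0 p') = max (R.distS S0 q) (R.distS S0 q') ∧
       R.vlt p' q')))

def type0 [LT B] (R : Rep K V0 A B) (Fa : A → QA) (aq : QA) (t s : V0) : Prop :=
  ¬ ∃ α : A, Fa α = aq ∧ R.vle (R.src α) s ∧ R.vle t (R.tgt α)

def type1 (R : Rep K V0 A B) (Fa : A → QA) (aq : QA) (t s : V0) : Prop :=
  ∃ α : A, Fa α = aq ∧ R.src α = s ∧ R.tgt α = t

def type2a [LT B] (R : Rep K V0 A B) (S0 : Set V0) (Fv : V0 → QV) (Fa : A → QA)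
    (aq : QA) (t s : V0) : Prop :=
  ∃ α' α'' : A, Fa α' = aq ∧ Fa α'' = aq ∧ R.tgt α' = t ∧ R.vlt (R.src α') s ∧
    R.src α'' = s ∧ R.vlt (R.tgt α'') t ∧ R.psiLt S0 Fv t (R.tgt α'') (R.src α') s

def type2b [LT B] (R : Rep K V0 A B) (S0 : Set V0) (Fv : V0 → QV) (Fa : A → QA)
    (aq : QA) (t s : V0) : Prop :=
  ∃ α' α'' : A, Fa α' = aq ∧ Fa α'' = aq ∧ R.tgt α' = t ∧ R.vlt (R.src α') s ∧
    R.src α'' = s ∧ R.vlt (R.tgt α'') t ∧ R.psiLt S0 Fv (R.src α') s t (R.tgt α'')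

def type3a [LT B] (R : Rep K V0 A B) (S0 : Set V0) (Fv : V0 → QV) (Fa : A → QA)
    (aq : QA) (t s : V0) : Prop :=
  ∃ α'' : A, Fa α'' = aq ∧ R.src α'' = s ∧ R.vlt t (R.tgt α'') ∧
    (¬ ∃ α : A, Fa α = aq ∧ R.tgt α = t) ∧
    ∀ α : A, Fa α = aq → R.vlt t (R.tgt α) → R.vlt (R.tgt α) (R.tgt α'') →
      R.psiLt S0 Fv (R.src α) s t (R.tgt α'')

def type4a [LT B] (R : Rep K V0 A B) (S0 : Set V0) (Fv : V0 → QV) (Fa : A → QA)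
    (aq : QA) (t s : V0) : Prop :=
  ∃ α' : A, Fa α' = aq ∧ R.tgt α' = t ∧ R.vlt (R.src α') s ∧
    (¬ ∃ α : A, Fa α = aq ∧ R.src α = s) ∧
    ∀ α : A, Fa α = aq → R.vlt (R.src α') (R.src α) → R.vlt (R.src α) s →
      R.psiLt S0 Fv t (R.tgt α) (R.src α') s

/-- `F` is strictly ordered with respect to the ordered basis. -/
def StrictlyOrdered [LT B] (R : Rep K V0 A B) (Fa : A → QA) : Prop :=
  ∀ α α' : A, α ≠ α' → Fa α = Fa α' →
    (R.vlt (R.src α) (R.src α') ∧ R.vlt (R.tgt α) (R.tgt α')) ∨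
    (R.vlt (R.src α') (R.src α) ∧ R.vlt (R.tgt α') (R.tgt α))

/-- The pair `(p, p')` is a relevant pair. -/
def relPair [LT B] (R : Rep K V0 A B) (S0 : Set V0) (Fv : V0 → QV) (p p' : V0) : Prop :=
  Fv p = Fv p' ∧ R.vle p p' ∧ p' ∉ S0

/-- Condition of Hypothesis (H) on outgoing arrows at the relevant pair `(p, p')`. -/
def outOK [LT B] (R : Rep K V0 A B) (S0 : Set V0) (Fv : V0 → QV) (Fa : A → QA)
    (qsrc qtgt : QA → QV) (p p' : V0) (aq : QA) : Prop :=
  qsrc aq = Fv p →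
    ((¬ ∃ α : A, Fa α = aq ∧ R.src α = p') →
      ∀ q : V0, Fv q = qtgt aq → R.type0 Fa aq q p') ∧
    ((∃ α : A, Fa α = aq ∧ R.src α = p') →
      ∃ α : A, Fa α = aq ∧ R.src α = p ∧
        (R.type1 Fa aq (R.tgt α) p' ∨ R.type2b S0 Fv Fa aq (R.tgt α) p'))

/-- Condition of Hypothesis (H) on incoming arrows at the relevant pair `(p, p')`. -/
def inOK [LT B] (R : Rep K V0 A B) (S0 : Set V0) (Fv : V0 → QV) (Fa : A → QA)
    (qsrc qtgt : QA → QV) (p p' : V0) (aq : QA) : Prop :=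
  qtgt aq = Fv p →
    ((¬ ∃ α : A, Fa α = aq ∧ R.tgt α = p) →
      ∀ q' : V0, Fv q' = qsrc aq → R.type0 Fa aq p q') ∧
    ((∃ α : A, Fa α = aq ∧ R.tgt α = p) →
      ∃ α : A, Fa α = aq ∧ R.tgt α = p' ∧
        (R.type1 Fa aq p (R.src α) ∨ R.type2a S0 Fv Fa aq p (R.src α)))

/-- Exceptional situation (1) of Hypothesis (H). -/
def exc1 [LinearOrder B] (R : Rep K V0 A B) (S0 : Set V0) (S1 : Set A) (Fv : V0 → QV)
    (Fa : A → QA) (qsrc : QA → QV) (p p' : V0) (aq : QA) : Prop :=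
  qsrc aq = Fv p ∧ ∃ α : A, Fa α = aq ∧ R.src α = p ∧
    (R.type2a S0 Fv Fa aq (R.tgt α) p' ∨ R.type4a S0 Fv Fa aq (R.tgt α) p') ∧
    (α ∈ S1 → R.IsIdMat α)

/-- Exceptional situation (2) of Hypothesis (H). -/
def exc2 [LT B] (R : Rep K V0 A B) (S0 : Set V0) (Fv : V0 → QV) (Fa : A → QA)
    (qtgt : QA → QV) (p p' : V0) (aq : QA) : Prop :=
  qtgt aq = Fv p ∧ ∃ α : A, Fa α = aq ∧ R.tgt α = p' ∧
    (R.type2b S0 Fv Fa aq p (R.src α) ∨ R.type3a S0 Fv Fa aq p (R.src α))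

/-- Hypothesis (H). -/
def HypH [LinearOrder B] (R : Rep K V0 A B) (S0 : Set V0) (S1 : Set A)
    (qsrc qtgt : QA → QV) (Fv : V0 → QV) (Fa : A → QA) : Prop :=
  R.StrictlyOrdered Fa ∧
  ∀ p p' : V0, R.relPair S0 Fv p p' →
    ((∀ aq : QA, R.outOK S0 Fv Fa qsrc qtgt p p' aq ∧ R.inOK S0 Fv Fa qsrc qtgt p p' aq) ∨
     (∃ aq0 : QA,
        (R.exc1 S0 S1 Fv Fa qsrc p p' aq0 ∨ R.exc2 S0 Fv Fa qtgt p p' aq0) ∧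
        ∀ aq : QA, aq ≠ aq0 →
          R.outOK S0 Fv Fa qsrc qtgt p p' aq ∧ R.inOK S0 Fv Fa qsrc qtgt p p' aq))


end Rep

end QGr

set_option linter.unusedSectionVars false
set_option linter.unusedVariables false
set_option maxHeartbeats 1000000

namespace KPSaux

variable {K : Type} [Field K] {ι τ : Type} [Fintype ι] [DecidableEq ι] [Fintype τ]
  [DecidableEq τ]

section Reduced

variable (j : τ → ι) (v : τ → ι → K)
  (h1 : ∀ t, v t (j t) = 1) (h2 : ∀ t s, s ≠ t → v t (j s) = 0)

include h1 h2 in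
theorem coord_sum (c : τ → K) (s : τ) : (∑ t, c t • v t) (j s) = c s := by
  have : (∑ t, c t • v t) (j s) = ∑ t, c t * v t (j s) := by
    rw [Finset.sum_apply]; simp [Pi.smul_apply, smul_eq_mul]
  rw [this, Finset.sum_eq_single s]
  · rw [h1 s]; ring
  · intro b _ hb; rw [h2 b s (Ne.symm hb)]; ring
  · intro h; exact absurd (Finset.mem_univ s) h

include h1 h2 in
theorem mem_span_iff (x : ι → K) :
    x ∈ Submodule.span K (Set.range v) ↔ x = ∑ t, x (j t) • v t := by
  constructor
  · intro hx
    obtain ⟨c, hc⟩ := (Submodule.mem_span_range_iff_exists_fun K).mp hx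
    have hcs : ∀ s, c s = x (j s) := fun s => by
      rw [← hc]; exact (coord_sum j v h1 h2 c s).symm
    rw [← hc]
    exact Finset.sum_congr rfl fun t _ => by
      congr 1
      exact (coord_sum j v h1 h2 c t).symm
  · intro hx
    rw [hx]
    exact Submodule.sum_mem _ fun t _ =>
      Submodule.smul_mem _ _ (Submodule.subset_span (Set.mem_range_self t))

include h1 h2 in
theorem linind : LinearIndependent K v := by
  rw [Fintype.linearIndependent_iff]
  intro c hc t
  have := coord_sum j v h1 h2 c t
  rw [hc] at this
  simpa using this.symm

include h1 h2 in
theorem finrank_span : Module.finrank K (Submodule.span K (Set.range v)) = Fintype.card τ :=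
  finrank_span_eq_card (linind j v h1 h2)

end Reduced

end KPSaux

namespace KPSaux2

variable {K : Type} [Field K] {ι τ : Type} [Fintype ι] [DecidableEq ι] [Fintype τ]
  [DecidableEq τ]

theorem reduced_unique (j : τ → ι) (v v' : τ → ι → K)
    (h1 : ∀ t, v t (j t) = 1) (h2 : ∀ t s, s ≠ t → v t (j s) = 0)
    (h1' : ∀ t, v' t (j t) = 1) (h2' : ∀ t s, s ≠ t → v' t (j s) = 0)
    (hsp : Submodule.span K (Set.range v) = Submodule.span K (Set.range v')) : v = v' := by
  funext t
  have hm : v t ∈ Submodule.span K (Set.range v') := by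
    rw [← hsp]; exact Submodule.subset_span (Set.mem_range_self t)
  have := (KPSaux.mem_span_iff j v' h1' h2' (v t)).mp hm
  rw [this, Finset.sum_eq_single t]
  · rw [h1 t, one_smul]
  · intro s _ hst
    rw [h2 t s hst, zero_smul]
  · intro h; exact absurd (Finset.mem_univ t) h

/-- Graph lemma: a system `x v = g v x` (for `v` pivot), where `g v` depends only on
coordinates of strictly smaller rank, has solution set in bijection with the free
coordinates. -/
theorem graph_equiv {V : Type} [Fintype V] (Pv : V → Prop) (ρ : V → ℕ)
    (g : ∀ v : V, (V → K) → K)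
    (hdep : ∀ v, Pv v → ∀ x y : V → K, (∀ w, ρ w < ρ v → x w = y w) → g v x = g v y)
    (hpos : ∀ v, Pv v → 1 ≤ ρ v) (hfree : ∀ v, ¬ Pv v → ρ v = 0) :
    Nonempty ({x : V → K // ∀ v, Pv v → x v = g v x} ≃ ({v : V // ¬ Pv v} → K)) := by
  classical
  -- injectivity of restriction
  have hinj : ∀ x y : V → K, (∀ v, Pv v → x v = g v x) → (∀ v, Pv v → y v = g v y) →
      (∀ v : V, ¬ Pv v → x v = y v) → x = y := by
    intro x y hx hy hfr
    funext v
    have H : ∀ k : ℕ, ∀ v : V, ρ v = k → x v = y v := by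
      intro k
      induction k using Nat.strong_induction_on with
      | _ k IH =>
        intro v hv
        by_cases hP : Pv v
        · rw [hx v hP, hy v hP]
          exact hdep v hP x y (fun w hw => IH (ρ w) (hv ▸ hw) w rfl)
        · exact hfr v hP
    exact H (ρ v) v rfl
  -- construction of a solution extending a free assignment
  have hsur : ∀ yf : {v : V // ¬ Pv v} → K, ∃ x : V → K,
      (∀ v, Pv v → x v = g v x) ∧ ∀ v (h : ¬ Pv v), x v = yf ⟨v, h⟩ := by
    intro yf
    set seq : ℕ → (V → K) := fun k => Nat.rec
      (fun v => if h : Pv v then 0 else yf ⟨v, h⟩)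
      (fun _ prev v => if Pv v then g v prev else prev v) k with hseq
    have seq0 : ∀ v (h : ¬ Pv v), ∀ k, seq k v = yf ⟨v, h⟩ := by
      intro v h k
      induction k with
      | zero => simp [hseq, h]
      | succ k ih => simp only [hseq] at ih ⊢; simp [h, ih]
    have stab : ∀ k, ∀ v, Pv v → ρ v ≤ k → seq (k+1) v = seq k v := by
      intro k
      induction k with
      | zero => intro v hP h0; exact absurd (le_trans (hpos v hP) h0) (by omega)
      | succ k IH =>
        intro v hP hk
        have e1 : seq (k+2) v = g v (seq (k+1)) := by simp [hseq, hP]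
        have e2 : seq (k+1) v = g v (seq k) := by simp [hseq, hP]
        rw [e1, e2]
        apply hdep v hP
        intro w hw
        by_cases hPw : Pv w
        · exact IH w hPw (by omega)
        · rw [seq0 w hPw (k+1), seq0 w hPw k]
    obtain ⟨N, hN⟩ : ∃ N : ℕ, ∀ v : V, ρ v ≤ N :=
      ⟨Finset.univ.sup ρ, fun v => Finset.le_sup (Finset.mem_univ v)⟩
    refine ⟨seq N, ?_, fun v h => seq0 v h N⟩
    intro v hP
    have e1 : seq (N+1) v = g v (seq N) := by simp [hseq, hP]
    rw [← e1]
    exact (stab N v hP (hN v)).symm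
  -- assemble the equivalence
  refine ⟨Equiv.ofBijective (fun x => fun v => x.1 v.1) ⟨?_, ?_⟩⟩
  · intro x y hxy
    apply Subtype.ext
    apply hinj x.1 y.1 x.2 y.2
    intro v hv
    exact congrFun hxy ⟨v, hv⟩
  · intro yf
    obtain ⟨x, hx1, hx2⟩ := hsur yf
    exact ⟨⟨x, hx1⟩, funext fun v => hx2 v.1 v.2⟩

end KPSaux2


namespace KPS

open QGr

variable {K : Type} [Field K]

abbrev vt (n : ℕ) (b : Fin (2*n+1)) : Bool := decide (n ≤ (b : ℕ))

theorem vtf {n : ℕ} {b : Fin (2*n+1)} : vt n b = false ↔ (b : ℕ) < n := by simp [vt]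
theorem vtt {n : ℕ} {b : Fin (2*n+1)} : vt n b = true ↔ n ≤ (b : ℕ) := by simp [vt]

abbrev ιp (n : ℕ) (p : Bool) := {b : Fin (2*n+1) // vt n b = p}

section mm

variable (n : ℕ) (mm : ∀ a : Bool, (ιp n false → K) → (ιp n true → K))
  (hlin : ∀ a, IsLinearMap K (mm a))
  (hNa : ∀ (i : ℕ) (hi : i < n),
    mm false (Pi.single ⟨⟨i, by omega⟩, by simp [vtf]; omega⟩ 1) =
      Pi.single ⟨⟨n + i, (Nat.add_lt_add_left hi n).trans_le (by omega)⟩, by simp [vtt]⟩ 1)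
  (hNb : ∀ (i : ℕ) (hi : i < n),
    mm true (Pi.single ⟨⟨i, by omega⟩, by simp [vtf]; omega⟩ 1) =
      Pi.single ⟨⟨n + i + 1, (Nat.succ_lt_succ (Nat.add_lt_add_left hi n)).trans_le (by omega)⟩, by simp [vtt]; omega⟩ 1)

include hlin hNa in
theorem mmA (y : ιp n false → K) (c : ιp n true) :
    mm false y c = if h : (c : ℕ) < 2*n then
      y ⟨⟨(c : ℕ) - n, by omega⟩, by simp [vtf]; have := vtt.mp c.2; omega⟩ else 0 := by
  have hy : y = ∑ i : ιp n false, Pi.single i (y i) := (Finset.univ_sum_single y).symm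
  have hmm : mm false y = ∑ i : ιp n false, y i • mm false (Pi.single i 1) := by
    conv_lhs => rw [hy]
    have hms : mm false (∑ i : ιp n false, Pi.single i (y i)) =
        ∑ i : ιp n false, mm false (Pi.single i (y i)) :=
      map_sum ((hlin false).mk' (mm false)) _ _
    rw [hms]
    refine Finset.sum_congr rfl fun i _ => ?_
    have : Pi.single i (y i) = y i • (Pi.single i 1 : ιp n false → K) := by
      rw [← Pi.single_smul, smul_eq_mul, mul_one]
    rw [this, IsLinearMap.map_smul (hlin false)]
  have hc := vtt.mp c.2
  rw [hmm, Finset.sum_apply]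
  by_cases h : (c : ℕ) < 2*n
  · rw [dif_pos h]
    set i0 : ιp n false := ⟨⟨(c : ℕ) - n, by omega⟩, by simp [vtf]; omega⟩ with hi0
    rw [Finset.sum_eq_single i0]
    · have hfi := vtf.mp i0.2
      have he := hNa (i0 : ℕ) hfi
      have : (⟨⟨(i0 : ℕ), by omega⟩, by simp [vtf]; omega⟩ : ιp n false) = i0 :=
        Subtype.ext (Fin.ext rfl)
      rw [this] at he
      rw [he]
      have hceq : (⟨⟨n + (i0 : ℕ), by omega⟩, by simp [vtt]⟩ : ιp n true) = c := by
        apply Subtype.ext; apply Fin.ext; simp [hi0]; omega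
      rw [hceq, Pi.smul_apply, Pi.single_eq_same, smul_eq_mul, mul_one]
    · intro i _ hi
      have hfi := vtf.mp i.2
      have he := hNa (i : ℕ) hfi
      have : (⟨⟨(i : ℕ), by omega⟩, by simp [vtf]; omega⟩ : ιp n false) = i :=
        Subtype.ext (Fin.ext rfl)
      rw [this] at he
      rw [he, Pi.smul_apply, Pi.single_eq_of_ne, smul_eq_mul, mul_zero]
      intro hcc
      apply hi
      apply Subtype.ext; apply Fin.ext
      have : ((c : Fin (2*n+1)) : ℕ) = n + (i : ℕ) := by
        simpa using congrArg (fun z : ιp n true => ((z : Fin (2*n+1)) : ℕ)) hcc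
      simp [hi0]; omega
    · intro hni; exact absurd (Finset.mem_univ i0) hni
  · rw [dif_neg h]
    refine Finset.sum_eq_zero fun i _ => ?_
    have hfi := vtf.mp i.2
    have he := hNa (i : ℕ) hfi
    have : (⟨⟨(i : ℕ), by omega⟩, by simp [vtf]; omega⟩ : ιp n false) = i :=
      Subtype.ext (Fin.ext rfl)
    rw [this] at he
    rw [he, Pi.smul_apply, Pi.single_eq_of_ne, smul_eq_mul, mul_zero]
    intro hcc
    have : ((c : Fin (2*n+1)) : ℕ) = n + (i : ℕ) := by
      simpa using congrArg (fun z : ιp n true => ((z : Fin (2*n+1)) : ℕ)) hcc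
    omega

include hlin hNb in
theorem mmB (y : ιp n false → K) (c : ιp n true) :
    mm true y c = if h : n < (c : ℕ) then
      y ⟨⟨(c : ℕ) - n - 1, by omega⟩, by simp [vtf]; have := c.1.2; omega⟩ else 0 := by
  have hy : y = ∑ i : ιp n false, Pi.single i (y i) := (Finset.univ_sum_single y).symm
  have hmm : mm true y = ∑ i : ιp n false, y i • mm true (Pi.single i 1) := by
    conv_lhs => rw [hy]
    have hms : mm true (∑ i : ιp n false, Pi.single i (y i)) =
        ∑ i : ιp n false, mm true (Pi.single i (y i)) :=
      map_sum ((hlin true).mk' (mm true)) _ _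
    rw [hms]
    refine Finset.sum_congr rfl fun i _ => ?_
    have : Pi.single i (y i) = y i • (Pi.single i 1 : ιp n false → K) := by
      rw [← Pi.single_smul, smul_eq_mul, mul_one]
    rw [this, IsLinearMap.map_smul (hlin true)]
  have hc := vtt.mp c.2
  rw [hmm, Finset.sum_apply]
  by_cases h : n < (c : ℕ)
  · rw [dif_pos h]
    set i0 : ιp n false := ⟨⟨(c : ℕ) - n - 1, by omega⟩, by simp [vtf]; have := c.1.2; omega⟩ with hi0
    rw [Finset.sum_eq_single i0]
    · have hfi := vtf.mp i0.2
      have he := hNb (i0 : ℕ) hfi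
      have : (⟨⟨(i0 : ℕ), by omega⟩, by simp [vtf]; omega⟩ : ιp n false) = i0 :=
        Subtype.ext (Fin.ext rfl)
      rw [this] at he
      rw [he]
      have hceq : (⟨⟨n + (i0 : ℕ) + 1, by omega⟩, by simp [vtt]; omega⟩ : ιp n true) = c := by
        apply Subtype.ext; apply Fin.ext; simp [hi0]; omega
      rw [hceq, Pi.smul_apply, Pi.single_eq_same, smul_eq_mul, mul_one]
    · intro i _ hi
      have hfi := vtf.mp i.2
      have he := hNb (i : ℕ) hfi
      have : (⟨⟨(i : ℕ), by omega⟩, by simp [vtf]; omega⟩ : ιp n false) = i :=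
        Subtype.ext (Fin.ext rfl)
      rw [this] at he
      rw [he, Pi.smul_apply, Pi.single_eq_of_ne, smul_eq_mul, mul_zero]
      intro hcc
      apply hi
      apply Subtype.ext; apply Fin.ext
      have : ((c : Fin (2*n+1)) : ℕ) = n + (i : ℕ) + 1 := by
        simpa using congrArg (fun z : ιp n true => ((z : Fin (2*n+1)) : ℕ)) hcc
      simp [hi0]; omega
    · intro hni; exact absurd (Finset.mem_univ i0) hni
  · rw [dif_neg h]
    refine Finset.sum_eq_zero fun i _ => ?_
    have hfi := vtf.mp i.2
    have he := hNb (i : ℕ) hfi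
    have : (⟨⟨(i : ℕ), by omega⟩, by simp [vtf]; omega⟩ : ιp n false) = i :=
      Subtype.ext (Fin.ext rfl)
    rw [this] at he
    rw [he, Pi.smul_apply, Pi.single_eq_of_ne, smul_eq_mul, mul_zero]
    intro hcc
    have : ((c : Fin (2*n+1)) : ℕ) = n + (i : ℕ) + 1 := by
      simpa using congrArg (fun z : ιp n true => ((z : Fin (2*n+1)) : ℕ)) hcc
    omega

end mm

section cell

variable (n : ℕ) (β : Finset (Fin (2*n+1)))

def Idx : Type :=
  {q : Fin (2*n+1) × Fin (2*n+1) //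
    q.1 ∈ β ∧ q.2 ∉ β ∧ q.2 < q.1 ∧ vt n q.1 = vt n q.2}

instance : Fintype (Idx n β) := by unfold Idx; infer_instance

def ent (x : Idx n β → K) (a b : Fin (2*n+1)) : K :=
  if h : a ∈ β ∧ b ∉ β ∧ b < a ∧ vt n a = vt n b then x ⟨(a,b), h⟩ else 0

abbrev τp (p : Bool) := {b : Fin (2*n+1) // b ∈ β ∧ vt n b = p}

def lam (x : Idx n β → K) (j u : ℕ) : K :=
  if h : u < n ∧ j < u then ent n β x ⟨u, by omega⟩ ⟨j, by omega⟩ else 0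

def mu (x : Idx n β → K) (j t : ℕ) : K :=
  if h : t ≤ n ∧ j < t then ent n β x ⟨n+t, by omega⟩ ⟨n+j, by omega⟩ else 0

def lamD (x : Idx n β → K) (j u : ℕ) : K := if j = u then 1 else lam n β x j u

def Sc : Prop := ∀ (b : ℕ) (hb : b < n), (⟨b, by omega⟩ : Fin (2*n+1)) ∈ β →
  ((⟨n+b, (Nat.add_lt_add_left hb n).trans_le (by omega)⟩ : Fin (2*n+1)) ∈ β ∧
    (⟨n+b+1, (Nat.succ_lt_succ (Nat.add_lt_add_left hb n)).trans_le (by omega)⟩ : Fin (2*n+1)) ∈ β)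

def yA (x : Idx n β → K) (u m : ℕ) : K := if m < n then lamD n β x m u else 0
def yB (x : Idx n β → K) (u m : ℕ) : K := if 1 ≤ m then lamD n β x (m-1) u else 0
def yy (x : Idx n β → K) (a : Bool) (u m : ℕ) : K :=
  if a then yB n β x u m else yA n β x u m

def Pv (q : Idx n β) : Prop :=
  if h : (q.1.1 : ℕ) < n then
    (⟨n + (q.1.2 : ℕ), by have := Fin.lt_def.mp q.2.2.2.1; omega⟩ : Fin (2*n+1)) ∉ β
  else (n+1 ≤ (q.1.1 : ℕ) ∧ (⟨(q.1.1 : ℕ) - (n+1), by omega⟩ : Fin (2*n+1)) ∈ β)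

def rho (q : Idx n β) : ℕ :=
  if Pv n β q then (if (q.1.1 : ℕ) < n then 2*(q.1.1 : ℕ)+1 else 2*((q.1.1 : ℕ) - n))
  else 0

def g (q : Idx n β) (x : Idx n β → K) : K :=
  if (q.1.1 : ℕ) < n then
    ∑ s : τp n β true, yA n β x (q.1.1 : ℕ) ((s.1 : ℕ) - n) *
      mu n β x (q.1.2 : ℕ) ((s.1 : ℕ) - n)
  else
    yB n β x ((q.1.1 : ℕ)-n-1) ((q.1.2 : ℕ)-n) -
      ∑ s : τp n β true, (if (s.1 : ℕ) = (q.1.1 : ℕ) then 0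
        else yB n β x ((q.1.1 : ℕ)-n-1) ((s.1 : ℕ)-n) *
          mu n β x ((q.1.2 : ℕ)-n) ((s.1 : ℕ)-n))

def ES (x : Idx n β → K) (a : Bool) (t : τp n β false) (c : ιp n true) : Prop :=
  yy n β x a (t.1 : ℕ) ((c.1 : ℕ)-n) =
    ∑ s : τp n β true, yy n β x a (t.1 : ℕ) ((s.1 : ℕ)-n) *
      (if (c.1 : ℕ) = (s.1 : ℕ) then 1 else mu n β x ((c.1 : ℕ)-n) ((s.1 : ℕ)-n))

-- basic facts
theorem lam_zero (x : Idx n β → K) {j u : ℕ} (h : ¬ j < u) : lam n β x j u = 0 :=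
  dif_neg fun hc => h hc.2

theorem mu_zero (x : Idx n β → K) {j t : ℕ} (h : ¬ j < t) : mu n β x j t = 0 :=
  dif_neg fun hc => h hc.2

theorem lamD_zero (x : Idx n β → K) {j u : ℕ} (h : u < j) : lamD n β x j u = 0 := by
  rw [lamD, if_neg (by omega), lam_zero n β x (by omega)]

theorem ent_eq_x (x : Idx n β → K) (q : Idx n β) : ent n β x q.1.1 q.1.2 = x q := by
  rw [ent, dif_pos ⟨q.2.1, q.2.2.1, q.2.2.2.1, q.2.2.2.2⟩]
  exact congrArg x (Subtype.ext rfl)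

theorem lam_eq_x (x : Idx n β → K) (q : Idx n β) (hu : (q.1.1 : ℕ) < n) :
    lam n β x (q.1.2 : ℕ) (q.1.1 : ℕ) = x q := by
  rw [lam, dif_pos ⟨hu, Fin.lt_def.mp q.2.2.2.1⟩]
  exact ent_eq_x n β x q

theorem mu_eq_x (x : Idx n β → K) (q : Idx n β) (h1 : n ≤ (q.1.1 : ℕ))
    (h2 : n ≤ (q.1.2 : ℕ)) :
    mu n β x ((q.1.2 : ℕ)-n) ((q.1.1 : ℕ)-n) = x q := by
  have hlt := Fin.lt_def.mp q.2.2.2.1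
  have hb1 : (q.1.1 : ℕ) < 2*n+1 := q.1.1.2
  rw [mu, dif_pos ⟨by omega, by omega⟩]
  have e1 : (⟨n + ((q.1.1 : ℕ) - n), by omega⟩ : Fin (2*n+1)) = q.1.1 := by
    apply Fin.ext; simp; omega
  have e2 : (⟨n + ((q.1.2 : ℕ) - n), by omega⟩ : Fin (2*n+1)) = q.1.2 := by
    apply Fin.ext; simp; omega
  rw [e1, e2]
  exact ent_eq_x n β x q

theorem mu_zero_mem (x : Idx n β → K) {j t : ℕ}
    (hmem : ∀ (hb : n+j < 2*n+1), (⟨n+j, hb⟩ : Fin (2*n+1)) ∈ β) : mu n β x j t = 0 := by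
  rw [mu]
  split
  · next h =>
    rw [ent, dif_neg]
    intro hc
    exact hc.2.1 (hmem (by omega))
  · rfl

-- rho bounds
theorem rho_le (q : Idx n β) :
    rho n β q ≤ (if (q.1.1 : ℕ) < n then 2*(q.1.1 : ℕ)+1 else 2*((q.1.1 : ℕ) - n)) := by
  rw [rho]; split
  · exact le_refl _
  · positivity

theorem rho_zero_of_not_piv (q : Idx n β) (h : ¬ Pv n β q) : rho n β q = 0 := if_neg h

end cell




section cell2

variable (n : ℕ) (β : Finset (Fin (2*n+1)))

theorem rho_le' (q : Idx n β) : rho n β q ≤ 2*(q.1.1 : ℕ)+1 :=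
  (rho_le n β q).trans (by split <;> omega)

theorem rho_pos (q : Idx n β) (hq : Pv n β q) : 1 ≤ rho n β q := by
  rw [rho, if_pos hq]
  by_cases h : (q.1.1 : ℕ) < n
  · rw [if_pos h]; omega
  · rw [if_neg h]
    rw [Pv, dif_neg h] at hq
    omega

theorem ent_congr {N : ℕ} (x y : Idx n β → K) (hxy : ∀ w, rho n β w < N → x w = y w)
    (a b : Fin (2*n+1))
    (hr : ∀ (h : a ∈ β ∧ b ∉ β ∧ b < a ∧ vt n a = vt n b), rho n β ⟨(a,b),h⟩ < N) :
    ent n β x a b = ent n β y a b := by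
  rw [ent, ent]
  split
  · next h => exact hxy _ (hr h)
  · rfl

theorem lam_congr {N : ℕ} (x y : Idx n β → K) (hxy : ∀ w, rho n β w < N → x w = y w)
    (j u : ℕ) (hN : 2*u+1 < N) : lam n β x j u = lam n β y j u := by
  rw [lam, lam]
  split
  · next h =>
    apply ent_congr n β x y hxy
    intro hcond
    have hb := rho_le' n β ⟨(⟨u, by omega⟩, ⟨j, by omega⟩), hcond⟩
    simp only [Fin.val_mk] at hb
    omega
  · rfl

theorem lamD_congr {N : ℕ} (x y : Idx n β → K) (hxy : ∀ w, rho n β w < N → x w = y w)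
    (j u : ℕ) (hN : 2*u+1 < N) : lamD n β x j u = lamD n β y j u := by
  rw [lamD, lamD]
  split
  · rfl
  · exact lam_congr n β x y hxy j u hN

theorem lam_congr_free {N : ℕ} (x y : Idx n β → K) (hxy : ∀ w, rho n β w < N → x w = y w)
    (j u : ℕ) (hN : 0 < N) (hj : ∀ (hb : n+j < 2*n+1), (⟨n+j, hb⟩ : Fin (2*n+1)) ∈ β) :
    lam n β x j u = lam n β y j u := by
  rw [lam, lam]
  split
  · next h =>
    apply ent_congr n β x y hxy
    intro hcond
    have hnp : ¬ Pv n β ⟨(⟨u, by omega⟩, ⟨j, by omega⟩), hcond⟩ := by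
      unfold Pv
      have hu : ((⟨u, by omega⟩ : Fin (2*n+1)) : ℕ) < n := h.1
      rw [dif_pos hu]
      intro hmem
      have : (⟨n+j, by omega⟩ : Fin (2*n+1)) ∈ β := hj (by omega)
      exact hmem this
    rw [rho_zero_of_not_piv n β _ hnp]
    omega
  · rfl

theorem mu_congr {N : ℕ} (x y : Idx n β → K) (hxy : ∀ w, rho n β w < N → x w = y w)
    (j t : ℕ) (hN : 2*t < N) : mu n β x j t = mu n β y j t := by
  rw [mu, mu]
  split
  · next h =>
    apply ent_congr n β x y hxy
    intro hcond
    have hb := rho_le n β ⟨(⟨n+t, by omega⟩, ⟨n+j, by omega⟩), hcond⟩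
    simp only [Fin.val_mk] at hb
    rw [if_neg (by omega)] at hb
    omega
  · rfl

theorem g_dep (x y : Idx n β → K) (q : Idx n β) (hq : Pv n β q)
    (hxy : ∀ w, rho n β w < rho n β q → x w = y w) : g n β q x = g n β q y := by
  have hq12 := Fin.lt_def.mp q.2.2.2.1
  have hqb : (q.1.1 : ℕ) < 2*n+1 := q.1.1.2
  rw [g, g]
  by_cases h1 : (q.1.1 : ℕ) < n
  · rw [if_pos h1, if_pos h1]
    have hrq : rho n β q = 2*(q.1.1 : ℕ)+1 := by rw [rho, if_pos hq, if_pos h1]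
    refine Finset.sum_congr rfl fun s _ => ?_
    have hsn : n ≤ (s.1 : ℕ) := vtt.mp s.2.2
    by_cases h2 : (q.1.1 : ℕ) < (s.1 : ℕ) - n
    · have e1 : yA n β x (q.1.1 : ℕ) ((s.1 : ℕ) - n) = 0 := by
        rw [yA]; split
        · exact lamD_zero n β x h2
        · rfl
      have e2 : yA n β y (q.1.1 : ℕ) ((s.1 : ℕ) - n) = 0 := by
        rw [yA]; split
        · exact lamD_zero n β y h2
        · rfl
      rw [e1, e2, zero_mul, zero_mul]
    · have f1 : yA n β x (q.1.1 : ℕ) ((s.1 : ℕ) - n) =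
          yA n β y (q.1.1 : ℕ) ((s.1 : ℕ) - n) := by
        rw [yA, yA]
        split
        · rw [lamD, lamD]
          split
          · rfl
          · apply lam_congr_free n β x y hxy _ _ (by omega)
            intro hb
            have he : (⟨n+((s.1 : ℕ) - n), hb⟩ : Fin (2*n+1)) = s.1 := by
              apply Fin.ext; simp; omega
            rw [he]; exact s.2.1
        · rfl
      have f2 : mu n β x (q.1.2 : ℕ) ((s.1 : ℕ) - n) =
          mu n β y (q.1.2 : ℕ) ((s.1 : ℕ) - n) :=
        mu_congr n β x y hxy (q.1.2 : ℕ) ((s.1 : ℕ) - n) (by omega)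
      rw [f1, f2]
  · rw [if_neg h1, if_neg h1]
    have hrq : rho n β q = 2*((q.1.1 : ℕ) - n) := by rw [rho, if_pos hq, if_neg h1]
    rw [Pv, dif_neg h1] at hq
    have hq1 : n+1 ≤ (q.1.1 : ℕ) := hq.1
    have f0 : yB n β x ((q.1.1 : ℕ)-n-1) ((q.1.2 : ℕ)-n) =
        yB n β y ((q.1.1 : ℕ)-n-1) ((q.1.2 : ℕ)-n) := by
      rw [yB, yB]
      split
      · exact lamD_congr n β x y hxy (((q.1.2 : ℕ)-n)-1) ((q.1.1 : ℕ)-n-1) (by omega)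
      · rfl
    rw [f0]
    congr 1
    refine Finset.sum_congr rfl fun s _ => ?_
    have hsn : n ≤ (s.1 : ℕ) := vtt.mp s.2.2
    by_cases hse : (s.1 : ℕ) = (q.1.1 : ℕ)
    · rw [if_pos hse, if_pos hse]
    · rw [if_neg hse, if_neg hse]
      by_cases h2 : (q.1.1 : ℕ) - n ≤ (s.1 : ℕ) - n
      · have e1 : yB n β x ((q.1.1 : ℕ)-n-1) ((s.1 : ℕ)-n) = 0 := by
          rw [yB]; split
          · exact lamD_zero n β x (by omega)
          · rfl
        have e2 : yB n β y ((q.1.1 : ℕ)-n-1) ((s.1 : ℕ)-n) = 0 := by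
          rw [yB]; split
          · exact lamD_zero n β y (by omega)
          · rfl
        rw [e1, e2, zero_mul, zero_mul]
      · have f1 : yB n β x ((q.1.1 : ℕ)-n-1) ((s.1 : ℕ)-n) =
            yB n β y ((q.1.1 : ℕ)-n-1) ((s.1 : ℕ)-n) := by
          rw [yB, yB]
          split
          · exact lamD_congr n β x y hxy (((s.1 : ℕ)-n)-1) ((q.1.1 : ℕ)-n-1) (by omega)
          · rfl
        have f2 : mu n β x ((q.1.2 : ℕ)-n) ((s.1 : ℕ)-n) =
            mu n β y ((q.1.2 : ℕ)-n) ((s.1 : ℕ)-n) :=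
          mu_congr n β x y hxy ((q.1.2 : ℕ)-n) ((s.1 : ℕ)-n) (by omega)
        rw [f1, f2]

end cell2




section cell3

variable (n : ℕ) (β : Finset (Fin (2*n+1)))

theorem sum_split {α : Type} [Fintype α] [DecidableEq α] (F : α → K) (s0 : α) :
    ∑ s, F s = F s0 + ∑ s, (if s = s0 then 0 else F s) := by
  have h : ∀ s, F s = (if s = s0 then F s0 else 0) + (if s = s0 then 0 else F s) := by
    intro s; by_cases h : s = s0 <;> simp [h]
  calc ∑ s, F s
      = ∑ s, ((if s = s0 then F s0 else 0) + (if s = s0 then 0 else F s)) :=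
        Finset.sum_congr rfl fun s _ => h s
    _ = _ := by
        rw [Finset.sum_add_distrib, Finset.sum_ite_eq' Finset.univ s0 (fun _ => F s0),
          if_pos (Finset.mem_univ s0)]

theorem ES_mem (x : Idx n β → K) (a : Bool) (t : τp n β false) (c : ιp n true)
    (hc : c.1 ∈ β) : ES n β x a t c := by
  have hcn : n ≤ (c.1 : ℕ) := vtt.mp c.2
  set s0 : τp n β true := ⟨c.1, hc, c.2⟩ with hs0
  rw [ES]
  have hterm : ∀ s : τp n β true,
      yy n β x a (t.1 : ℕ) ((s.1 : ℕ)-n) *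
        (if (c.1 : ℕ) = (s.1 : ℕ) then 1 else mu n β x ((c.1 : ℕ)-n) ((s.1 : ℕ)-n)) =
      (if s = s0 then yy n β x a (t.1 : ℕ) ((c.1 : ℕ)-n) else 0) := by
    intro s
    by_cases h : (c.1 : ℕ) = (s.1 : ℕ)
    · rw [if_pos h, if_pos (by apply Subtype.ext; exact (Fin.ext h).symm), mul_one]
      rw [← h]
    · rw [if_neg h, if_neg (fun he => h (by rw [he]))]
      rw [mu_zero_mem n β x (fun hb => by
        have he : (⟨n+((c.1 : ℕ)-n), hb⟩ : Fin (2*n+1)) = c.1 := by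
          apply Fin.ext; simp; omega
        rw [he]; exact hc), mul_zero]
  rw [Finset.sum_congr rfl fun s _ => hterm s,
    Finset.sum_ite_eq' Finset.univ s0 (fun _ => yy n β x a (t.1 : ℕ) ((c.1 : ℕ)-n)),
    if_pos (Finset.mem_univ s0)]

theorem ES_triv_a (x : Idx n β → K) (t : τp n β false) (c : ιp n true)
    (hc : c.1 ∉ β) (hgt : (t.1 : ℕ) < (c.1 : ℕ)-n) : ES n β x false t c := by
  have hcn : n ≤ (c.1 : ℕ) := vtt.mp c.2
  rw [ES]
  have hL : yy n β x false (t.1 : ℕ) ((c.1 : ℕ)-n) = 0 := by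
    rw [yy, if_neg (by simp), yA]
    split
    · exact lamD_zero n β x hgt
    · rfl
  rw [hL]
  symm
  refine Finset.sum_eq_zero fun s _ => ?_
  have hsn : n ≤ (s.1 : ℕ) := vtt.mp s.2.2
  rw [if_neg (fun he => hc (by rw [show c.1 = s.1 from Fin.ext he]; exact s.2.1))]
  by_cases h2 : (s.1 : ℕ) - n ≤ (t.1 : ℕ)
  · rw [mu_zero n β x (by omega), mul_zero]
  · rw [yy, if_neg (by simp), yA]
    split
    · rw [lamD_zero n β x (by omega), zero_mul]
    · rw [zero_mul]

theorem ES_triv_b (x : Idx n β → K) (t : τp n β false) (c : ιp n true)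
    (hc : c.1 ∉ β) (hgt : (t.1 : ℕ)+1 < (c.1 : ℕ)-n) : ES n β x true t c := by
  have hcn : n ≤ (c.1 : ℕ) := vtt.mp c.2
  rw [ES]
  have hL : yy n β x true (t.1 : ℕ) ((c.1 : ℕ)-n) = 0 := by
    rw [yy, if_pos rfl, yB]
    split
    · exact lamD_zero n β x (by omega)
    · rfl
  rw [hL]
  symm
  refine Finset.sum_eq_zero fun s _ => ?_
  have hsn : n ≤ (s.1 : ℕ) := vtt.mp s.2.2
  rw [if_neg (fun he => hc (by rw [show c.1 = s.1 from Fin.ext he]; exact s.2.1))]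
  by_cases h2 : (s.1 : ℕ) - n ≤ (t.1 : ℕ)+1
  · rw [mu_zero n β x (by omega), mul_zero]
  · rw [yy, if_pos rfl, yB]
    split
    · rw [lamD_zero n β x (by omega), zero_mul]
    · rw [zero_mul]

end cell3




section cell4

variable (n : ℕ) (β : Finset (Fin (2*n+1)))

theorem Pv_lam_intro (q : Idx n β) (h1 : (q.1.1 : ℕ) < n)
    (h2 : ∀ (hb : n + (q.1.2 : ℕ) < 2*n+1), (⟨n + (q.1.2 : ℕ), hb⟩ : Fin (2*n+1)) ∉ β) :
    Pv n β q := by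
  rw [Pv, dif_pos h1]; exact h2 _

theorem Pv_mu_intro (q : Idx n β) (h1 : ¬ (q.1.1 : ℕ) < n) (h2 : n+1 ≤ (q.1.1 : ℕ))
    (h3 : ∀ (hb : (q.1.1 : ℕ)-(n+1) < 2*n+1),
      (⟨(q.1.1 : ℕ)-(n+1), hb⟩ : Fin (2*n+1)) ∈ β) :
    Pv n β q := by
  rw [Pv, dif_neg h1]; exact ⟨h2, h3 _⟩

theorem ES_lam_iff (x : Idx n β → K) (q : Idx n β) (h1 : (q.1.1 : ℕ) < n)
    (hPv : Pv n β q) (t : τp n β false) (c : ιp n true)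
    (ht : t.1 = q.1.1) (hc : (c.1 : ℕ) = n + (q.1.2 : ℕ)) :
    ES n β x false t c ↔ (x q = g n β q x) := by
  have hq12 := Fin.lt_def.mp q.2.2.2.1
  rw [Pv, dif_pos h1] at hPv
  have hm : (c.1 : ℕ) - n = (q.1.2 : ℕ) := by omega
  rw [ES, ht, hm]
  have hL : yy n β x false (q.1.1 : ℕ) (q.1.2 : ℕ) = x q := by
    rw [yy, if_neg (by simp), yA, if_pos (by omega), lamD, if_neg (by omega),
      lam_eq_x n β x q h1]
  have hR : (∑ s : τp n β true, yy n β x false (q.1.1 : ℕ) ((s.1 : ℕ)-n) *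
      (if (c.1 : ℕ) = (s.1 : ℕ) then 1 else mu n β x (q.1.2 : ℕ) ((s.1 : ℕ)-n))) =
      g n β q x := by
    rw [g, if_pos h1]
    refine Finset.sum_congr rfl fun s _ => ?_
    have hne : ¬ (c.1 : ℕ) = (s.1 : ℕ) := by
      intro he
      apply hPv
      have he2 : (⟨n + (q.1.2 : ℕ), by omega⟩ : Fin (2*n+1)) = s.1 := by
        apply Fin.ext; simp only [Fin.val_mk]; omega
      rw [he2]; exact s.2.1
    rw [if_neg hne, yy, if_neg (by simp), yA]
  rw [hL, hR]

theorem ES_mu_iff (x : Idx n β → K) (q : Idx n β) (h1 : ¬ (q.1.1 : ℕ) < n)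
    (hPv : Pv n β q) (t : τp n β false) (c : ιp n true)
    (ht : (t.1 : ℕ) = (q.1.1 : ℕ) - n - 1) (hc : c.1 = q.1.2) :
    ES n β x true t c ↔ (x q = g n β q x) := by
  have hq12 := Fin.lt_def.mp q.2.2.2.1
  have hqb : (q.1.1 : ℕ) < 2*n+1 := q.1.1.2
  rw [Pv, dif_neg h1] at hPv
  have hq2n : n ≤ (q.1.2 : ℕ) := by
    have hvt : vt n q.1.2 = true := by
      rw [← q.2.2.2.2]; exact vtt.mpr (by omega)
    exact vtt.mp hvt
  set s0 : τp n β true := ⟨q.1.1, q.2.1, vtt.mpr (by omega)⟩ with hs0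
  rw [ES, ht, hc]
  have hsum : (∑ s : τp n β true, yy n β x true ((q.1.1 : ℕ)-n-1) ((s.1 : ℕ)-n) *
      (if (q.1.2 : ℕ) = (s.1 : ℕ) then 1 else mu n β x ((q.1.2 : ℕ)-n) ((s.1 : ℕ)-n))) =
      ∑ s : τp n β true, yB n β x ((q.1.1 : ℕ)-n-1) ((s.1 : ℕ)-n) *
        mu n β x ((q.1.2 : ℕ)-n) ((s.1 : ℕ)-n) := by
    refine Finset.sum_congr rfl fun s _ => ?_
    have hne : ¬ (q.1.2 : ℕ) = (s.1 : ℕ) := by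
      intro he
      exact q.2.2.1 (by rw [show q.1.2 = s.1 from Fin.ext he]; exact s.2.1)
    rw [if_neg hne, yy, if_pos rfl]
  have hFs0 : yB n β x ((q.1.1 : ℕ)-n-1) ((s0.1 : ℕ)-n) *
      mu n β x ((q.1.2 : ℕ)-n) ((s0.1 : ℕ)-n) = x q := by
    have hs0v : (s0.1 : ℕ) = (q.1.1 : ℕ) := rfl
    rw [hs0v, yB, if_pos (by omega), lamD, if_pos (by omega), one_mul,
      mu_eq_x n β x q (by omega) hq2n]
  have hgs : (∑ s : τp n β true, (if s = s0 then 0 else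
      yB n β x ((q.1.1 : ℕ)-n-1) ((s.1 : ℕ)-n) *
        mu n β x ((q.1.2 : ℕ)-n) ((s.1 : ℕ)-n))) =
      ∑ s : τp n β true, (if (s.1 : ℕ) = (q.1.1 : ℕ) then 0 else
      yB n β x ((q.1.1 : ℕ)-n-1) ((s.1 : ℕ)-n) *
        mu n β x ((q.1.2 : ℕ)-n) ((s.1 : ℕ)-n)) := by
    refine Finset.sum_congr rfl fun s _ => ?_
    refine if_congr ?_ rfl rfl
    constructor
    · intro h; rw [h]
    · intro h; exact Subtype.ext (Fin.ext h)
  have hg : g n β q x = yB n β x ((q.1.1 : ℕ)-n-1) ((q.1.2 : ℕ)-n) -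
      ∑ s : τp n β true, (if (s.1 : ℕ) = (q.1.1 : ℕ) then 0 else
      yB n β x ((q.1.1 : ℕ)-n-1) ((s.1 : ℕ)-n) *
        mu n β x ((q.1.2 : ℕ)-n) ((s.1 : ℕ)-n)) := by
    rw [g, if_neg h1]
  have hL : yy n β x true ((q.1.1 : ℕ)-n-1) ((q.1.2 : ℕ)-n) =
      yB n β x ((q.1.1 : ℕ)-n-1) ((q.1.2 : ℕ)-n) := if_pos rfl
  rw [hL, hsum,
    sum_split (fun s : τp n β true => yB n β x ((q.1.1 : ℕ)-n-1) ((s.1 : ℕ)-n) *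
      mu n β x ((q.1.2 : ℕ)-n) ((s.1 : ℕ)-n)) s0,
    hFs0, hgs, hg]
  constructor
  · intro h; rw [h]; ring
  · intro h; rw [h]; ring

theorem ES_iff_piv (hsc : Sc n β) (x : Idx n β → K) :
    (∀ a t c, ES n β x a t c) ↔ (∀ q, Pv n β q → x q = g n β q x) := by
  constructor
  · intro hall q hPv
    have hq12 := Fin.lt_def.mp q.2.2.2.1
    have hqb : (q.1.1 : ℕ) < 2*n+1 := q.1.1.2
    by_cases h1 : (q.1.1 : ℕ) < n
    · exact (ES_lam_iff n β x q h1 hPv ⟨q.1.1, q.2.1, vtf.mpr h1⟩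
        ⟨⟨n + (q.1.2 : ℕ), by omega⟩, vtt.mpr (by simp only [Fin.val_mk]; omega)⟩
        rfl (by simp only [Fin.val_mk])).mp (hall false _ _)
    · have hq2n : n ≤ (q.1.2 : ℕ) := by
        have hvt : vt n q.1.2 = true := by
          rw [← q.2.2.2.2]; exact vtt.mpr (by omega)
        exact vtt.mp hvt
      have hPv' := hPv
      rw [Pv, dif_neg h1] at hPv'
      refine (ES_mu_iff n β x q h1 hPv ⟨⟨(q.1.1 : ℕ) - n - 1, by omega⟩,
        ?_, vtf.mpr (by simp only [Fin.val_mk]; omega)⟩ ⟨q.1.2, vtt.mpr hq2n⟩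
        (by simp only [Fin.val_mk]) rfl).mp (hall true _ _)
      have he : (⟨(q.1.1 : ℕ) - (n+1), by omega⟩ : Fin (2*n+1)) =
          (⟨(q.1.1 : ℕ) - n - 1, by omega⟩ : Fin (2*n+1)) := by
        apply Fin.ext; simp only [Fin.val_mk]; omega
      rw [← he]; exact hPv'.2
  · intro hp a t c
    by_cases hc : c.1 ∈ β
    · exact ES_mem n β x a t c hc
    · have hcn : n ≤ (c.1 : ℕ) := vtt.mp c.2
      have hcb : (c.1 : ℕ) < 2*n+1 := c.1.2
      have hun : (t.1 : ℕ) < n := vtf.mp t.2.2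
      have hsuc := hsc (t.1 : ℕ) hun (by
        have he : (⟨(t.1 : ℕ), by omega⟩ : Fin (2*n+1)) = t.1 := Fin.ext rfl
        rw [he]; exact t.2.1)
      cases a
      · -- arrow a (false)
        by_cases hlt : (c.1 : ℕ) - n < (t.1 : ℕ)
        · have hmnb : (⟨(c.1 : ℕ) - n, by omega⟩ : Fin (2*n+1)) ∉ β := by
            intro hmem
            have h2 := (hsc ((c.1 : ℕ) - n) (by omega) hmem).1
            have he : (⟨n + ((c.1 : ℕ) - n), by omega⟩ : Fin (2*n+1)) = c.1 := by
              apply Fin.ext; simp only [Fin.val_mk]; omega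
            rw [he] at h2; exact hc h2
          set q0 : Idx n β := ⟨(t.1, ⟨(c.1 : ℕ) - n, by omega⟩),
            t.2.1, hmnb, Fin.lt_def.mpr (by simp only [Fin.val_mk]; omega),
            by rw [t.2.2]; symm; exact vtf.mpr (by simp only [Fin.val_mk]; omega)⟩
            with hq0
          have h1 : (q0.1.1 : ℕ) < n := hun
          have hPv0 : Pv n β q0 := by
            apply Pv_lam_intro n β q0 h1
            intro hb hmem
            have he : (⟨n + (q0.1.2 : ℕ), hb⟩ : Fin (2*n+1)) = c.1 := by
              apply Fin.ext; simp only [hq0, Fin.val_mk]; omega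
            rw [he] at hmem; exact hc hmem
          exact (ES_lam_iff n β x q0 h1 hPv0 t c rfl
            (by simp only [hq0, Fin.val_mk]; omega)).mpr (hp q0 hPv0)
        · have hne : (c.1 : ℕ) - n ≠ (t.1 : ℕ) := by
            intro he
            apply hc
            have he2 : (⟨n + (t.1 : ℕ), by omega⟩ : Fin (2*n+1)) = c.1 := by
              apply Fin.ext; simp only [Fin.val_mk]; omega
            rw [← he2]; exact hsuc.1
          exact ES_triv_a n β x t c hc (by omega)
      · -- arrow b (true)
        by_cases hlt : (c.1 : ℕ) - n < (t.1 : ℕ) + 1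
        · set q0 : Idx n β := ⟨(⟨n + (t.1 : ℕ) + 1, by omega⟩, c.1),
            hsuc.2, hc, Fin.lt_def.mpr (by simp only [Fin.val_mk]; omega),
            by rw [show vt n c.1 = true from c.2]
               exact vtt.mpr (by simp only [Fin.val_mk]; omega)⟩ with hq0
          have h1 : ¬ (q0.1.1 : ℕ) < n := by
            simp only [hq0, Fin.val_mk]; omega
          have hPv0 : Pv n β q0 := by
            apply Pv_mu_intro n β q0 h1 (by simp only [hq0, Fin.val_mk]; omega)
            intro hb
            have he : (⟨(q0.1.1 : ℕ) - (n+1), hb⟩ : Fin (2*n+1)) = t.1 := by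
              apply Fin.ext; simp only [hq0, Fin.val_mk]; omega
            rw [he]; exact t.2.1
          exact (ES_mu_iff n β x q0 h1 hPv0 t c
            (by simp only [hq0, Fin.val_mk]; omega) rfl).mpr (hp q0 hPv0)
        · have hne : (c.1 : ℕ) - n ≠ (t.1 : ℕ) + 1 := by
            intro he
            apply hc
            have he2 : (⟨n + (t.1 : ℕ) + 1, by omega⟩ : Fin (2*n+1)) = c.1 := by
              apply Fin.ext; simp only [Fin.val_mk]; omega
            rw [← he2]; exact hsuc.2
          exact ES_triv_b n β x t c hc (by omega)

end cell4



section vmksec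

variable (n : ℕ) (β : Finset (Fin (2*n+1)))

def vmk (x : Idx n β → K) (p : Bool) (b0 : τp n β p) (b1 : ιp n p) : K :=
  if b1.1 = b0.1 then 1 else ent n β x b0.1 b1.1

theorem vmk_diag (x : Idx n β → K) (p : Bool) (b0 : τp n β p) :
    vmk n β x p b0 ⟨b0.1, b0.2.2⟩ = 1 := if_pos rfl

theorem vmk_off (x : Idx n β → K) (p : Bool) (b0 : τp n β p) (b1 : ιp n p)
    (h1 : b1.1 ≠ b0.1) (h2 : ¬(b1.1 < b0.1 ∧ b1.1 ∉ β)) : vmk n β x p b0 b1 = 0 := by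
  rw [vmk, if_neg h1, ent, dif_neg]
  intro hc
  exact h2 ⟨hc.2.2.1, hc.2.1⟩

theorem vmk_offβ (x : Idx n β → K) (p : Bool) (b0 : τp n β p) (s : τp n β p)
    (hne : s ≠ b0) : vmk n β x p b0 ⟨s.1, s.2.2⟩ = 0 := by
  apply vmk_off
  · exact fun h => hne (Subtype.ext h)
  · intro h; exact h.2 s.2.1

theorem vmk_false (x : Idx n β → K) (t : τp n β false) (i : ιp n false) :
    vmk n β x false t i = lamD n β x (i : ℕ) (t : ℕ) := by
  have htn : ((t : Fin (2*n+1)) : ℕ) < n := vtf.mp t.2.2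
  rw [vmk, lamD]
  by_cases h : i.1 = t.1
  · rw [if_pos h, if_pos (by rw [h])]
  · rw [if_neg h, if_neg (fun hv => h (Fin.ext hv))]
    rw [lam]
    by_cases h2 : (i : ℕ) < (t : ℕ)
    · rw [dif_pos ⟨htn, h2⟩]
    · rw [dif_neg (fun hc => h2 hc.2), ent, dif_neg]
      intro hc
      exact h2 hc.2.2.1

theorem vmk_true (x : Idx n β → K) (s : τp n β true) (c : ιp n true) :
    vmk n β x true s c =
      if ((c : Fin (2*n+1)) : ℕ) = ((s : Fin (2*n+1)) : ℕ) then 1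
      else mu n β x ((c : ℕ) - n) ((s : ℕ) - n) := by
  have hsn : n ≤ ((s : Fin (2*n+1)) : ℕ) := vtt.mp s.2.2
  have hcn : n ≤ ((c : Fin (2*n+1)) : ℕ) := vtt.mp c.2
  have hs2 : ((s : Fin (2*n+1)) : ℕ) < 2*n+1 := (s : Fin (2*n+1)).2
  have hc2 : ((c : Fin (2*n+1)) : ℕ) < 2*n+1 := (c : Fin (2*n+1)).2
  rw [vmk]
  by_cases h : c.1 = s.1
  · rw [if_pos h, if_pos (by rw [h])]
  · rw [if_neg h, if_neg (fun hv => h (Fin.ext hv))]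
    rw [mu]
    by_cases h2 : (c : ℕ) < (s : ℕ)
    · rw [dif_pos ⟨by omega, by omega⟩]
      have e1 : (⟨n + ((s : ℕ) - n), by omega⟩ : Fin (2*n+1)) = s.1 := by
        apply Fin.ext; simp; omega
      have e2 : (⟨n + ((c : ℕ) - n), by omega⟩ : Fin (2*n+1)) = c.1 := by
        apply Fin.ext; simp; omega
      rw [e1, e2]
    · rw [dif_neg (by omega), ent, dif_neg]
      intro hc
      exact h2 hc.2.2.1

def WS (x : Idx n β → K) : ∀ p : Bool, Submodule K (ιp n p → K) :=
  fun p => Submodule.span K (Set.range (vmk n β x p))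

theorem card_τp (p : Bool) :
    Fintype.card (τp n β p) = (β.filter fun b => vt n b = p).card := by
  rw [Fintype.card_subtype]
  congr 1
  ext b
  simp [Finset.mem_filter]


end vmksec

section stageD

open QGr

variable (n : ℕ) (mm : ∀ a : Bool, (ιp n false → K) → (ιp n true → K))

/-- The concrete Kronecker preprojective representation. -/
def Rc : Rep K Bool Bool (Fin (2*n+1)) :=
  ⟨fun _ => false, fun _ => true, vt n, mm⟩

variable (β : Finset (Fin (2*n+1)))

def RC (x : Idx n β → K) (a : Bool) (t : τp n β false) (c : ιp n true) : Prop :=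
  mm a (vmk n β x false t) c =
    ∑ s : τp n β true, mm a (vmk n β x false t) ⟨s.1, s.2.2⟩ * vmk n β x true s c

variable (hlin : ∀ a, IsLinearMap K (mm a))
  (hNa : ∀ (i : ℕ) (hi : i < n),
    mm false (Pi.single ⟨⟨i, by omega⟩, by simp [vtf]; omega⟩ 1) =
      Pi.single ⟨⟨n + i, (Nat.add_lt_add_left hi n).trans_le (by omega)⟩, by simp [vtt]⟩ 1)
  (hNb : ∀ (i : ℕ) (hi : i < n),
    mm true (Pi.single ⟨⟨i, by omega⟩, by simp [vtf]; omega⟩ 1) =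
      Pi.single ⟨⟨n + i + 1, (Nat.succ_lt_succ (Nat.add_lt_add_left hi n)).trans_le (by omega)⟩, by simp [vtt]; omega⟩ 1)

include hlin hNa hNb in
theorem mm_vmk (x : Idx n β → K) (a : Bool) (t : τp n β false) (c : ιp n true) :
    mm a (vmk n β x false t) c = yy n β x a (t.1 : ℕ) ((c.1 : ℕ)-n) := by
  have hcn : n ≤ (c.1 : ℕ) := vtt.mp c.2
  cases a
  · rw [mmA n mm hlin hNa (vmk n β x false t) c, yy, if_neg (by simp), yA]
    by_cases h : (c.1 : ℕ) < 2*n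
    · rw [dif_pos h, if_pos (by omega), vmk_false]
    · rw [dif_neg h, if_neg (by omega)]
  · rw [mmB n mm hlin hNb (vmk n β x false t) c, yy, if_pos rfl, yB]
    by_cases h : n < (c.1 : ℕ)
    · rw [dif_pos h, if_pos (by omega), vmk_false]
    · rw [dif_neg h, if_neg (by omega)]

include hlin hNa hNb in
theorem RC_iff_ES (x : Idx n β → K) (a : Bool) (t : τp n β false) (c : ιp n true) :
    RC n mm β x a t c ↔ ES n β x a t c := by
  unfold RC ES
  rw [mm_vmk n mm β hlin hNa hNb x a t c]
  have hR : (∑ s : τp n β true, mm a (vmk n β x false t) ⟨s.1, s.2.2⟩ *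
      vmk n β x true s c) =
      ∑ s : τp n β true, yy n β x a (t.1 : ℕ) ((s.1 : ℕ)-n) *
        (if (c.1 : ℕ) = (s.1 : ℕ) then 1 else mu n β x ((c.1 : ℕ)-n) ((s.1 : ℕ)-n)) := by
    refine Finset.sum_congr rfl fun s _ => ?_
    rw [mm_vmk n mm β hlin hNa hNb x a t ⟨s.1, s.2.2⟩, vmk_true]
  rw [hR]

include hlin in
theorem isSubrep_iff (x : Idx n β → K) :
    (Rc n mm).IsSubrep (WS n β x) ↔ ∀ a t c, RC n mm β x a t c := by
  constructor
  · intro hs a t c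
    have hz : vmk n β x false t ∈ WS n β x false :=
      Submodule.subset_span (Set.mem_range_self t)
    have hmem : mm a (vmk n β x false t) ∈ WS n β x true := hs a _ hz
    have heq := (KPSaux.mem_span_iff
      (fun s : τp n β true => (⟨s.1, s.2.2⟩ : ιp n true)) (vmk n β x true)
      (fun s => vmk_diag n β x true s)
      (fun s0 s1 hne => vmk_offβ n β x true s0 s1 hne) _).mp hmem
    have h2 := congrFun heq c
    unfold RC
    rw [h2, Finset.sum_apply]
    refine Finset.sum_congr rfl fun s _ => ?_
    rw [Pi.smul_apply, smul_eq_mul]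
  · intro hrc a z hz
    have hgen : ∀ t : τp n β false, mm a (vmk n β x false t) ∈ WS n β x true := by
      intro t
      apply (KPSaux.mem_span_iff
        (fun s : τp n β true => (⟨s.1, s.2.2⟩ : ιp n true)) (vmk n β x true)
        (fun s => vmk_diag n β x true s)
        (fun s0 s1 hne => vmk_offβ n β x true s0 s1 hne) _).mpr
      funext c
      rw [Finset.sum_apply]
      have := hrc a t c
      rw [RC] at this
      rw [this]
      refine Finset.sum_congr rfl fun s _ => ?_
      rw [Pi.smul_apply, smul_eq_mul]
    refine Submodule.span_induction (p := fun z _ => mm a z ∈ WS n β x true)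
      (fun z hz => ?_) ?_ (fun z w _ _ hz hw => ?_) (fun r z _ hz => ?_) hz
    · obtain ⟨t, rfl⟩ := hz
      exact hgen t
    · show mm a 0 ∈ WS n β x true
      rw [(hlin a).map_zero]
      exact Submodule.zero_mem _
    · show mm a (z + w) ∈ WS n β x true
      rw [(hlin a).map_add]
      exact Submodule.add_mem _ hz hw
    · show mm a (r • z) ∈ WS n β x true
      rw [(hlin a).map_smul]
      exact Submodule.smul_mem _ r hz

include hlin in
theorem WS_cell_iff (x : Idx n β → K) :
    WS n β x ∈ (Rc n mm).Cell β ↔ ∀ a t c, RC n mm β x a t c := by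
  constructor
  · intro h
    exact (isSubrep_iff n mm β hlin x).mp h.1
  · intro h
    refine ⟨(isSubrep_iff n mm β hlin x).mpr h, ?_, ?_⟩
    · intro p
      have h1 : Module.finrank K (WS n β x p) = Fintype.card (τp n β p) :=
        KPSaux.finrank_span (fun t : τp n β p => (⟨t.1, t.2.2⟩ : ιp n p))
          (vmk n β x p) (fun t => vmk_diag n β x p t)
          (fun s0 s1 hne => vmk_offβ n β x p s0 s1 hne)
      refine h1.trans ?_
      rw [card_τp n β p]
      congr 1
      ext b
      simp only [Finset.mem_filter]
      exact Iff.rfl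
    · intro p
      refine ⟨vmk n β x p, fun b0 => vmk_diag n β x p b0,
        fun b0 b1 h1 h2 => vmk_off n β x p b0 b1 h1 h2, rfl⟩

include hlin hNa hNb in
theorem cell_equiv_sol :
    Nonempty (↥((Rc n mm).Cell β) ≃
      {x : Idx n β → K // WS n β x ∈ (Rc n mm).Cell β}) := by
  refine ⟨(Equiv.ofBijective
    (fun x : {x : Idx n β → K // WS n β x ∈ (Rc n mm).Cell β} =>
      (⟨WS n β x.1, x.2⟩ : ↥((Rc n mm).Cell β))) ⟨?_, ?_⟩).symm⟩
  · -- injective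
    intro x y hxy
    have h : WS n β x.1 = WS n β y.1 := congrArg Subtype.val hxy
    apply Subtype.ext
    funext q
    have hvt2 : vt n q.1.2 = vt n q.1.1 := q.2.2.2.2.symm
    have hv : vmk n β x.1 (vt n q.1.1) = vmk n β y.1 (vt n q.1.1) := by
      apply KPSaux2.reduced_unique
        (fun t : τp n β (vt n q.1.1) => (⟨t.1, t.2.2⟩ : ιp n (vt n q.1.1)))
      · exact fun t => vmk_diag n β x.1 _ t
      · exact fun s0 s1 hne => vmk_offβ n β x.1 _ s0 s1 hne
      · exact fun t => vmk_diag n β y.1 _ t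
      · exact fun s0 s1 hne => vmk_offβ n β y.1 _ s0 s1 hne
      · exact congrFun h (vt n q.1.1)
    have hne : q.1.2 ≠ q.1.1 := ne_of_lt q.2.2.2.1
    have hx : vmk n β x.1 (vt n q.1.1) ⟨q.1.1, ⟨q.2.1, rfl⟩⟩ ⟨q.1.2, hvt2⟩ = x.1 q := by
      rw [vmk, if_neg hne]
      exact ent_eq_x n β x.1 q
    have hy : vmk n β y.1 (vt n q.1.1) ⟨q.1.1, ⟨q.2.1, rfl⟩⟩ ⟨q.1.2, hvt2⟩ = y.1 q := by
      rw [vmk, if_neg hne]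
      exact ent_eq_x n β y.1 q
    rw [← hx, ← hy, hv]
  · -- surjective
    rintro ⟨W, hW⟩
    obtain ⟨vF, hF1, hF2, hFsp⟩ := hW.2.2 false
    obtain ⟨vT, hT1, hT2, hTsp⟩ := hW.2.2 true
    set x : Idx n β → K := fun q =>
      if h : (q.1.1 : ℕ) < n then
        vF ⟨q.1.1, q.2.1, vtf.mpr h⟩
          ⟨q.1.2, by
            have h2 : vt n q.1.2 = false := by rw [← q.2.2.2.2]; exact vtf.mpr h
            exact h2⟩
      else
        vT ⟨q.1.1, q.2.1, vtt.mpr (by omega)⟩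
          ⟨q.1.2, by
            have h2 : vt n q.1.2 = true := by rw [← q.2.2.2.2]; exact vtt.mpr (by omega)
            exact h2⟩ with hx
    have hvmkF : vmk n β x false = vF := by
      funext t i
      have htn : (t.1 : ℕ) < n := vtf.mp t.2.2
      rw [vmk]
      by_cases h : i.1 = t.1
      · rw [if_pos h]
        have : i = ⟨t.1, t.2.2⟩ := Subtype.ext h
        rw [this]; exact (hF1 t).symm
      · rw [if_neg h]
        by_cases h2 : i.1 < t.1 ∧ i.1 ∉ β
        · have hq : (t.1, i.1).1 ∈ β ∧ (t.1, i.1).2 ∉ β ∧ (t.1, i.1).2 < (t.1, i.1).1 ∧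
              vt n (t.1, i.1).1 = vt n (t.1, i.1).2 := by
            refine ⟨t.2.1, h2.2, h2.1, ?_⟩
            rw [t.2.2, i.2]
          rw [ent, dif_pos hq]
          simp only [hx]
          split
          · exact congrArg₂ vF (Subtype.ext rfl) (Subtype.ext rfl)
          · next hneg => exact absurd htn hneg
        · rw [ent, dif_neg (fun hc => h2 ⟨hc.2.2.1, hc.2.1⟩)]
          exact (hF2 t i h (fun hc => h2 hc)).symm
    have hvmkT : vmk n β x true = vT := by
      funext t i
      have htn : n ≤ (t.1 : ℕ) := vtt.mp t.2.2
      rw [vmk]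
      by_cases h : i.1 = t.1
      · rw [if_pos h]
        have : i = ⟨t.1, t.2.2⟩ := Subtype.ext h
        rw [this]; exact (hT1 t).symm
      · rw [if_neg h]
        by_cases h2 : i.1 < t.1 ∧ i.1 ∉ β
        · have hq : (t.1, i.1).1 ∈ β ∧ (t.1, i.1).2 ∉ β ∧ (t.1, i.1).2 < (t.1, i.1).1 ∧
              vt n (t.1, i.1).1 = vt n (t.1, i.1).2 := by
            refine ⟨t.2.1, h2.2, h2.1, ?_⟩
            rw [t.2.2, i.2]
          rw [ent, dif_pos hq]
          simp only [hx]
          split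
          · next hpos => exact absurd hpos (by omega)
          · exact congrArg₂ vT (Subtype.ext rfl) (Subtype.ext rfl)
        · rw [ent, dif_neg (fun hc => h2 ⟨hc.2.2.1, hc.2.1⟩)]
          exact (hT2 t i h (fun hc => h2 hc)).symm
    have hWS : WS n β x = W := by
      funext p
      cases p
      · rw [WS, hvmkF]; exact hFsp.symm
      · rw [WS, hvmkT]; exact hTsp.symm
    exact ⟨⟨x, by rw [hWS]; exact hW⟩, Subtype.ext hWS⟩

include hlin hNa hNb in
theorem cell_empty (hnsc : ¬ Sc n β) : (Rc n mm).Cell β = ∅ := by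
  rw [Set.eq_empty_iff_forall_notMem]
  intro W hW
  rw [Sc] at hnsc
  push_neg at hnsc
  obtain ⟨b, hb, hmem, hcon⟩ := hnsc
  obtain ⟨vF, hF1, hF2, hFsp⟩ := hW.2.2 false
  obtain ⟨vT, hT1, hT2, hTsp⟩ := hW.2.2 true
  set t : τp n β false := ⟨⟨b, by omega⟩, hmem, vtf.mpr (by simp only [Fin.val_mk]; omega)⟩
    with hts
  have htv : (t.1 : ℕ) = b := by rw [hts]
  have hvF0 : ∀ j : ιp n false, (t.1 : ℕ) < (j.1 : ℕ) → vF t j = 0 := by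
    intro j hj
    apply hF2
    · intro hv
      have h3 := congrArg Fin.val hv
      omega
    · rintro ⟨hlt, -⟩
      have h3 := Fin.lt_def.mp hlt
      omega
  have hvmem : vF t ∈ W false := by
    rw [hFsp]
    exact Submodule.subset_span (Set.mem_range_self t)
  -- choose arrow and coordinate depending on which successor fails
  have key : ∀ (a : Bool) (c : ιp n true), (c.1 : ℕ) = (if a then n+b+1 else n+b) →
      c.1 ∉ β → False := by
    intro a c hcv hcb
    have hmm : mm a (vF t) ∈ W true := hW.1 a (vF t) hvmem
    rw [hTsp] at hmm
    have heq := (KPSaux.mem_span_iff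
      (fun s : τp n β true => (⟨s.1, s.2.2⟩ : ιp n true)) vT
      (fun s => hT1 s)
      (fun s0 s1 hne => hT2 s0 ⟨s1.1, s1.2.2⟩ (fun hv => hne (Subtype.ext hv))
        (fun hcon2 => hcon2.2 s1.2.1)) _).mp hmm
    have hc := congrFun heq c
    have hLHS : mm a (vF t) c = 1 := by
      cases a
      · rw [if_neg (by simp)] at hcv
        rw [mmA n mm hlin hNa (vF t) c, dif_pos (by omega)]
        have he : (⟨⟨(c.1 : ℕ) - n, by omega⟩, by simp [vtf]; omega⟩ : ιp n false) =
            ⟨t.1, t.2.2⟩ := by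
          apply Subtype.ext; apply Fin.ext; simp only [Fin.val_mk]; omega
        rw [he]; exact hF1 t
      · rw [if_pos rfl] at hcv
        rw [mmB n mm hlin hNb (vF t) c, dif_pos (by omega)]
        have he : (⟨⟨(c.1 : ℕ) - n - 1, by omega⟩, by simp [vtf]; have := c.1.2; omega⟩ :
            ιp n false) = ⟨t.1, t.2.2⟩ := by
          apply Subtype.ext; apply Fin.ext; simp only [Fin.val_mk]; omega
        rw [he]; exact hF1 t
    have hRHS : (∑ s : τp n β true, mm a (vF t) ⟨s.1, s.2.2⟩ • vT s) c = 0 := by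
      refine (Finset.sum_apply c _ _).trans ?_
      refine Finset.sum_eq_zero fun s _ => ?_
      show mm a (vF t) ⟨s.1, s.2.2⟩ * vT s c = 0
      have hsn : n ≤ (s.1 : ℕ) := vtt.mp s.2.2
      by_cases hs : (s.1 : ℕ) ≤ (c.1 : ℕ)
      · have hvz : vT s c = 0 := by
          apply hT2
          · intro hv
            exact hcb (by rw [show c.1 = s.1 from hv]; exact s.2.1)
          · intro hcon2
            exact absurd (Fin.lt_def.mp hcon2.1) (by omega)
        rw [hvz, mul_zero]
      · have hyz : mm a (vF t) ⟨s.1, s.2.2⟩ = 0 := by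
          cases a
          · rw [if_neg (by simp)] at hcv
            rw [mmA n mm hlin hNa (vF t) ⟨s.1, s.2.2⟩]
            split
            · exact hvF0 _ (show (t.1 : ℕ) < (s.1 : ℕ) - n by omega)
            · rfl
          · rw [if_pos rfl] at hcv
            rw [mmB n mm hlin hNb (vF t) ⟨s.1, s.2.2⟩]
            split
            · exact hvF0 _ (show (t.1 : ℕ) < (s.1 : ℕ) - n - 1 by omega)
            · rfl
        rw [hyz, zero_mul]
    rw [hLHS] at hc; have hc := hc.trans hRHS
    exact one_ne_zero hc
  by_cases h1 : (⟨n+b, by omega⟩ : Fin (2*n+1)) ∈ β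
  · have h2 : (⟨n+b+1, by omega⟩ : Fin (2*n+1)) ∉ β := fun h2 => hcon h1 h2
    exact key true ⟨⟨n+b+1, by omega⟩, vtt.mpr (by simp only [Fin.val_mk]; omega)⟩
      (by simp) h2
  · exact key false ⟨⟨n+b, by omega⟩, vtt.mpr (by simp only [Fin.val_mk]; omega)⟩
      (by simp) h1

include hlin hNa hNb in
theorem master :
    (Rc n mm).Cell β = ∅ ∨ ∃ d : ℕ, Nonempty (↥((Rc n mm).Cell β) ≃ (Fin d → K)) := by
  by_cases hsc : Sc n β
  · right
    obtain ⟨e1⟩ := cell_equiv_sol n mm β hlin hNa hNb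
    have hiff : ∀ x : Idx n β → K,
        (WS n β x ∈ (Rc n mm).Cell β) ↔ (∀ q, Pv n β q → x q = g n β q x) := by
      intro x
      rw [WS_cell_iff n mm β hlin x]
      have h1 : (∀ a t c, RC n mm β x a t c) ↔ (∀ a t c, ES n β x a t c) :=
        forall_congr' fun a => forall_congr' fun t => forall_congr' fun c =>
          RC_iff_ES n mm β hlin hNa hNb x a t c
      rw [h1]
      exact ES_iff_piv n β hsc x
    have e2 : {x : Idx n β → K // WS n β x ∈ (Rc n mm).Cell β} ≃
        {x : Idx n β → K // ∀ q, Pv n β q → x q = g n β q x} :=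
      Equiv.subtypeEquivRight hiff
    obtain ⟨e3⟩ := KPSaux2.graph_equiv (K := K) (Pv n β) (rho n β) (g n β)
      (fun q hq x y hxy => g_dep n β x y q hq hxy)
      (fun q hq => rho_pos n β q hq)
      (fun q hq => rho_zero_of_not_piv n β q hq)
    refine ⟨Fintype.card {q : Idx n β // ¬ Pv n β q}, ⟨?_⟩⟩
    exact e1.trans (e2.trans (e3.trans
      (Equiv.arrowCongr (Fintype.equivFin {q : Idx n β // ¬ Pv n β q}) (Equiv.refl K))))
  · exact Or.inl (cell_empty n mm β hlin hNa hNb hsc)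

end stageD


end KPS

open QGr in
/-- Let `N` be the preprojective indecomposable representation of the
Kronecker quiver (two vertices `false < true`, two arrows `a = false`, `b = true` from
`false` to `true`) with `N₁ = K^n` (basis `u₁ < ⋯ < u_n`, the first `n` basis elements),
`N₂ = K^{n+1}` (basis `v₁ < ⋯ < v_{n+1}`, the last `n+1` basis elements), and
`N_a(uᵢ) = vᵢ`, `N_b(uᵢ) = vᵢ₊₁`.  Then for every dimension vector `e` and every subset
`β` of the ordered basis of type `e`, the Schubert cell `C_β^N` is either empty or in
bijection with some affine space `K^d`. -/
theorem kronecker_preprojective_schubert_cells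
    {K : Type} [Field K] (n : ℕ) (hn : 1 ≤ n)
    (R : Rep K Bool Bool (Fin (2 * n + 1)))
    (hsrc : R.src = fun _ => false) (htgt : R.tgt = fun _ => true)
    (hvtx : R.vtx = fun b : Fin (2 * n + 1) => decide (n ≤ (b : ℕ)))
    (hlin : R.Linear)
    (hNa : ∀ (i : ℕ) (hi : i < n),
      R.MapsBasisTo false ⟨i, by omega⟩ ⟨n + i, by omega⟩)
    (hNb : ∀ (i : ℕ) (hi : i < n),
      R.MapsBasisTo true ⟨i, by omega⟩ ⟨n + i + 1, by omega⟩) :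
    ∀ (e : Bool → ℕ) (β : Finset (Fin (2 * n + 1))),
      (∀ q : Bool, (β.filter fun b => R.vtx b = q).card = e q) →
      (R.Cell β = ∅ ∨ ∃ d : ℕ, Nonempty (↥(R.Cell β) ≃ (Fin d → K))) := by
  obtain ⟨src, tgt, vtx, mmap⟩ := R
  change src = _ at hsrc
  change tgt = _ at htgt
  change vtx = _ at hvtx
  subst hsrc
  subst htgt
  subst hvtx
  intro e β _
  have hNa' : ∀ (i : ℕ) (hi : i < n),
      mmap false (Pi.single ⟨⟨i, by omega⟩, by simp [KPS.vtf]; omega⟩ 1) =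
        Pi.single ⟨⟨n + i, by omega⟩, by simp [KPS.vtt]⟩ 1 := by
    intro i hi
    obtain ⟨h0, h1, he⟩ := hNa i hi
    convert he
  have hNb' : ∀ (i : ℕ) (hi : i < n),
      mmap true (Pi.single ⟨⟨i, by omega⟩, by simp [KPS.vtf]; omega⟩ 1) =
        Pi.single ⟨⟨n + i + 1, by omega⟩, by simp [KPS.vtt]; omega⟩ 1 := by
    intro i hi
    obtain ⟨h0, h1, he⟩ := hNb i hi
    convert he
  exact KPS.master n mmap β hlin hNa' hNb'
end
end

section
/- Let K be a field and let Q be the quiver with vertices 1, 2, 3, two arrows g, d : 1 → 2 and one arrow a : 2 → 3. Let N be the representation of Q over K with N_1 = K with basis {c}, N_2 = K³ with ordered basis x_4 < x_5 < x_7, and N_3 = K³ with ordered basis y_1 < y_2 < y_3, where N_g(c) = x_5, N_d(c) = x_7, N_a(x_4) = y_2, N_a(x_5) = y_3 and N_a(x_7) = 0. Let β = {y_2, y_3, x_7}, a subset of type e = (0, 1, 2) of the ordered basis. Then the Schubert cell C_β^N is in bijection with the affine cone {(r, s, u, v) ∈ K⁴ : r·u + s·v = 0}, via sending (r, s, u,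 v) to the subrepresentation V with V_1 = 0, V_2 = span(x_7 + u·x_4 + v·x_5) and V_3 = span(y_2 + r·y_1, y_3 + s·y_1). -/
open scoped Classical

noncomputable section

namespace QGr

/-- The candidate point of the Schubert cell in Statement 19, attached to
`(r, s, u, v) ∈ K⁴`: `V₀ = 0`, `V₁ = span(x₇ + u·x₄ + v·x₅)` and
`V₂ = span(y₂ + r·y₁, y₃ + s·y₁)`, where the basis `B = Fin 7` is
`c = 0 < x₄ = 1 < x₅ = 2 < x₇ = 3 < y₁ = 4 < y₂ = 5 < y₃ = 6`. -/
def coneSubrep {K : Type} [Field K] (R : Rep K (Fin 3) (Fin 3) (Fin 7))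
    (r s u v : K) : R.SubRep := fun p =>
  Submodule.span K
    {x : {b : Fin 7 // R.vtx b = p} → K |
      (p = 1 ∧ x = fun b : {b : Fin 7 // R.vtx b = p} => if b.val = 3 then 1 else
        if b.val = 1 then u else if b.val = 2 then v else 0) ∨
      (p = 2 ∧ x = fun b : {b : Fin 7 // R.vtx b = p} => if b.val = 5 then 1 else
        if b.val = 4 then r else 0) ∨
      (p = 2 ∧ x = fun b : {b : Fin 7 // R.vtx b = p} => if b.val = 6 then 1 else
        if b.val = 4 then s else 0)}

end QGr

namespace QGr
variable {K : Type} [Field K]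

def wA (R : Rep K (Fin 3) (Fin 3) (Fin 7)) (u v : K) : {b : Fin 7 // R.vtx b = 1} → K :=
  fun b => if b.val = 3 then 1 else if b.val = 1 then u else if b.val = 2 then v else 0

def wB (R : Rep K (Fin 3) (Fin 3) (Fin 7)) (r : K) : {b : Fin 7 // R.vtx b = 2} → K :=
  fun b => if b.val = 5 then 1 else if b.val = 4 then r else 0

def wC (R : Rep K (Fin 3) (Fin 3) (Fin 7)) (s : K) : {b : Fin 7 // R.vtx b = 2} → K :=
  fun b => if b.val = 6 then 1 else if b.val = 4 then s else 0

variable {R : Rep K (Fin 3) (Fin 3) (Fin 7)}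

lemma mem1v (hvtx : R.vtx = ![0,1,1,1,2,2,2]) :
    ∀ b : Fin 7, R.vtx b = 1 → b = 1 ∨ b = 2 ∨ b = 3 := by
  intro b hb; rw [hvtx] at hb; revert b; decide

lemma mem2v (hvtx : R.vtx = ![0,1,1,1,2,2,2]) :
    ∀ b : Fin 7, R.vtx b = 2 → b = 4 ∨ b = 5 ∨ b = 6 := by
  intro b hb; rw [hvtx] at hb; revert b; decide

-- values
lemma wA3 (u v : K) (h : R.vtx 3 = 1) : wA R u v ⟨3, h⟩ = 1 := rfl
lemma wA1 (u v : K) (h : R.vtx 1 = 1) : wA R u v ⟨1, h⟩ = u := rfl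
lemma wA2 (u v : K) (h : R.vtx 2 = 1) : wA R u v ⟨2, h⟩ = v := rfl
lemma wB4 (r : K) (h : R.vtx 4 = 2) : wB R r ⟨4, h⟩ = r := rfl
lemma wB5 (r : K) (h : R.vtx 5 = 2) : wB R r ⟨5, h⟩ = 1 := rfl
lemma wB6 (r : K) (h : R.vtx 6 = 2) : wB R r ⟨6, h⟩ = 0 := rfl
lemma wC4 (s : K) (h : R.vtx 4 = 2) : wC R s ⟨4, h⟩ = s := rfl
lemma wC5 (s : K) (h : R.vtx 5 = 2) : wC R s ⟨5, h⟩ = 0 := rfl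
lemma wC6 (s : K) (h : R.vtx 6 = 2) : wC R s ⟨6, h⟩ = 1 := rfl

lemma sing_same {p : Fin 3} (b : Fin 7) (h : R.vtx b = p) :
    Pi.single (M := fun _ : {b : Fin 7 // R.vtx b = p} => K) ⟨b, h⟩ 1 ⟨b, h⟩ = 1 :=
  Pi.single_eq_same _ _

lemma sing_ne {p : Fin 3} (b c : Fin 7) (hb : R.vtx b = p) (hc : R.vtx c = p) (h : c ≠ b) :
    Pi.single (M := fun _ : {b : Fin 7 // R.vtx b = p} => K) ⟨b, hb⟩ 1 ⟨c, hc⟩ = 0 :=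
  Pi.single_eq_of_ne (fun he => h (congrArg Subtype.val he)) _

lemma wA_ne (u v : K) (h3 : R.vtx 3 = 1) : wA R u v ≠ 0 := fun h => by
  have := congrFun h ⟨3, h3⟩; rw [wA3] at this; simp at this

lemma finrankA (u v : K) (h3 : R.vtx 3 = 1) :
    Module.finrank K (Submodule.span K {wA R u v}) = 1 :=
  finrank_span_singleton (wA_ne u v h3)

lemma liBC (r s : K) (h5 : R.vtx 5 = 2) (h6 : R.vtx 6 = 2) :
    LinearIndependent K ![wB R r, wC R s] := by
  rw [LinearIndependent.pair_iff]
  intro a b hab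
  have e5 := congrFun hab ⟨5, h5⟩
  have e6 := congrFun hab ⟨6, h6⟩
  simp [wB, wC] at e5 e6
  exact ⟨e5, e6⟩

lemma rangeBC (r s : K) : Set.range ![wB R r, wC R s] = {wB R r, wC R s} := by
  ext x
  simp [Fin.exists_fin_two, or_comm]

lemma finrankBC (r s : K) (h5 : R.vtx 5 = 2) (h6 : R.vtx 6 = 2) :
    Module.finrank K (Submodule.span K {wB R r, wC R s}) = 2 := by
  rw [← rangeBC, finrank_span_eq_card (liBC r s h5 h6)]
  simp

lemma decompA (u v : K) (h1 : R.vtx 1 = 1) (h2 : R.vtx 2 = 1) (h3 : R.vtx 3 = 1)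
    (hvtx : R.vtx = ![0,1,1,1,2,2,2]) :
    wA R u v = Pi.single (M := fun _ => K) ⟨3, h3⟩ 1 + u • Pi.single (M := fun _ => K) ⟨1, h1⟩ 1 + v • Pi.single (M := fun _ => K) ⟨2, h2⟩ 1 := by
  funext b
  obtain ⟨b, hb⟩ := b
  rcases mem1v hvtx b hb with rfl | rfl | rfl <;>
    simp [wA, Pi.single_apply, Subtype.ext_iff]

lemma combB (r s u v : K) (h : r * u + s * v = 0) (h5 : R.vtx 5 = 2) (h6 : R.vtx 6 = 2)
    (hvtx : R.vtx = ![0,1,1,1,2,2,2]) :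
    u • Pi.single (M := fun _ => K) ⟨5, h5⟩ (1 : K) + v • Pi.single (M := fun _ => K) ⟨6, h6⟩ (1 : K) =
      u • wB R r + v • wC R s := by
  funext b
  obtain ⟨b, hb⟩ := b
  rcases mem2v hvtx b hb with rfl | rfl | rfl <;>
    simp [wB, wC, Pi.single_apply, Subtype.ext_iff]
  linear_combination -h


lemma single_congr_dec {ι : Type} {f : ι → Type} (inst : DecidableEq ι) [inst' : DecidableEq ι]
    [instz : ∀ i, Zero (f i)] (i : ι) (x : f i) :
    @Pi.single ι f instz inst i x = @Pi.single ι f instz inst' i x := by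
  cases Subsingleton.elim inst inst'
  rfl

lemma mem1β (hvtx : R.vtx = ![0,1,1,1,2,2,2]) :
    ∀ b : Fin 7, b ∈ ({3,5,6} : Finset (Fin 7)) → R.vtx b = 1 → b = 3 := by
  intro b hm hb; rw [hvtx] at hb; revert b; decide

lemma mem2β (hvtx : R.vtx = ![0,1,1,1,2,2,2]) :
    ∀ b : Fin 7, b ∈ ({3,5,6} : Finset (Fin 7)) → R.vtx b = 2 → b = 5 ∨ b = 6 := by
  intro b hm hb; rw [hvtx] at hb; revert b; decide


lemma mem0β (hvtx : R.vtx = ![0,1,1,1,2,2,2]) :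
    ∀ b : Fin 7, b ∈ ({3,5,6} : Finset (Fin 7)) → R.vtx b ≠ 0 := by
  intro b hm hb; rw [hvtx] at hb; revert b; decide

end QGr

namespace QGr
variable {K : Type} [Field K]
lemma cone0 (R : Rep K (Fin 3) (Fin 3) (Fin 7)) (r s u v : K) :
    coneSubrep R r s u v 0 = ⊥ := by
  rw [show (⊥ : Submodule K ({b : Fin 7 // R.vtx b = 0} → K)) = Submodule.span K ∅ by
    rw [Submodule.span_empty]]
  unfold coneSubrep
  congr 1
  ext x
  simp only [Set.mem_setOf_eq, Set.mem_empty_iff_false, iff_false]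
  rintro (⟨h, -⟩ | ⟨h, -⟩ | ⟨h, -⟩) <;> exact absurd h (by decide)

lemma cone1 (R : Rep K (Fin 3) (Fin 3) (Fin 7)) (r s u v : K) :
    coneSubrep R r s u v 1 = Submodule.span K {wA R u v} := by
  unfold coneSubrep
  congr 1
  ext x
  simp only [Set.mem_setOf_eq, Set.mem_singleton_iff]
  constructor
  · rintro (⟨-, h⟩ | ⟨h, -⟩ | ⟨h, -⟩)
    · exact h
    · exact absurd h (by decide)
    · exact absurd h (by decide)
  · intro h; exact Or.inl ⟨trivial, h⟩

lemma cone2 (R : Rep K (Fin 3) (Fin 3) (Fin 7)) (r s u v : K) :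
    coneSubrep R r s u v 2 = Submodule.span K {wB R r, wC R s} := by
  unfold coneSubrep
  congr 1
  ext x
  simp only [Set.mem_setOf_eq, Set.mem_insert_iff, Set.mem_singleton_iff]
  constructor
  · rintro (⟨h, -⟩ | ⟨-, h⟩ | ⟨-, h⟩)
    · exact absurd h (by decide)
    · exact Or.inl h
    · exact Or.inr h
  · rintro (h | h)
    · exact Or.inr (Or.inl ⟨trivial, h⟩)
    · exact Or.inr (Or.inr ⟨trivial, h⟩)

end QGr

open QGr in
/-- For the quiver with vertices `0, 1, 2`, arrows `g = 0, d = 1 : 0 → 1`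
and `a = 2 : 1 → 2`, and the representation `N` with `N₀ = K` (basis `c`), `N₁ = K³` (basis
`x₄ < x₅ < x₇`), `N₂ = K³` (basis `y₁ < y₂ < y₃`), `N_g(c) = x₅`, `N_d(c) = x₇`,
`N_a(x₄) = y₂`, `N_a(x₅) = y₃`, `N_a(x₇) = 0`, the Schubert cell `C_β^N` for
`β = {y₂, y₃, x₇}` is in bijection with the affine cone
`{(r,s,u,v) ∈ K⁴ : r·u + s·v = 0}` via `(r,s,u,v) ↦ (0, span(x₇ + u·x₄ + v·x₅),
span(y₂ + r·y₁, y₃ + s·y₁))`. -/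
theorem schubert_cell_affine_cone
    {K : Type} [Field K]
    (R : Rep K (Fin 3) (Fin 3) (Fin 7))
    (hsrc : R.src = ![0, 0, 1]) (htgt : R.tgt = ![1, 1, 2])
    (hvtx : R.vtx = ![0, 1, 1, 1, 2, 2, 2])
    (hlin : R.Linear)
    (hg : R.MapsBasisTo 0 0 2)
    (hd : R.MapsBasisTo 1 0 3)
    (ha4 : R.MapsBasisTo 2 1 5)
    (ha5 : R.MapsBasisTo 2 2 6)
    (ha7 : ∀ h : R.vtx 3 = R.src 2, R.mmap 2 (Pi.single ⟨3, h⟩ 1) = 0) :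
    (∀ z : {z : K × K × K × K // z.1 * z.2.2.1 + z.2.1 * z.2.2.2 = 0},
      coneSubrep R z.val.1 z.val.2.1 z.val.2.2.1 z.val.2.2.2 ∈
        R.Cell ({3, 5, 6} : Finset (Fin 7))) ∧
    (Function.Injective
      (fun z : {z : K × K × K × K // z.1 * z.2.2.1 + z.2.1 * z.2.2.2 = 0} =>
        coneSubrep R z.val.1 z.val.2.1 z.val.2.2.1 z.val.2.2.2)) ∧
    (∀ W ∈ R.Cell ({3, 5, 6} : Finset (Fin 7)),
      ∃ z : {z : K × K × K × K // z.1 * z.2.2.1 + z.2.1 * z.2.2.2 = 0},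
        coneSubrep R z.val.1 z.val.2.1 z.val.2.2.1 z.val.2.2.2 = W) := by
  obtain ⟨src, tgt, vtx, mmap⟩ := R
  change src = _ at hsrc
  change tgt = _ at htgt
  change vtx = _ at hvtx
  subst hsrc; subst htgt; subst hvtx
  have tri : ∀ p : Fin 3, p = 0 ∨ p = 1 ∨ p = 2 := by decide
  obtain ⟨h40, h45, e4⟩ := ha4
  obtain ⟨h50, h51, e5⟩ := ha5
  have lin2 := hlin 2
  have e4' := (congrArg ((⟨![0,0,1], ![1,1,2], ![0,1,1,1,2,2,2], mmap⟩ : Rep K (Fin 3) (Fin 3) (Fin 7)).mmap 2) (single_congr_dec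
      (ι := {b : Fin 7 // (⟨![0,0,1], ![1,1,2], ![0,1,1,1,2,2,2], mmap⟩ : Rep K (Fin 3) (Fin 3) (Fin 7)).vtx b = (⟨![0,0,1], ![1,1,2], ![0,1,1,1,2,2,2], mmap⟩ : Rep K (Fin 3) (Fin 3) (Fin 7)).src 2}) (f := fun _ => K) _ ⟨1, h40⟩ 1)).symm.trans
    (e4.trans (single_congr_dec
      (ι := {b : Fin 7 // (⟨![0,0,1], ![1,1,2], ![0,1,1,1,2,2,2], mmap⟩ : Rep K (Fin 3) (Fin 3) (Fin 7)).vtx b = (⟨![0,0,1], ![1,1,2], ![0,1,1,1,2,2,2], mmap⟩ : Rep K (Fin 3) (Fin 3) (Fin 7)).tgt 2}) (f := fun _ => K) _ ⟨5, h45⟩ 1))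
  have e5' := (congrArg ((⟨![0,0,1], ![1,1,2], ![0,1,1,1,2,2,2], mmap⟩ : Rep K (Fin 3) (Fin 3) (Fin 7)).mmap 2) (single_congr_dec
      (ι := {b : Fin 7 // (⟨![0,0,1], ![1,1,2], ![0,1,1,1,2,2,2], mmap⟩ : Rep K (Fin 3) (Fin 3) (Fin 7)).vtx b = (⟨![0,0,1], ![1,1,2], ![0,1,1,1,2,2,2], mmap⟩ : Rep K (Fin 3) (Fin 3) (Fin 7)).src 2}) (f := fun _ => K) _ ⟨2, h50⟩ 1)).symm.trans
    (e5.trans (single_congr_dec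
      (ι := {b : Fin 7 // (⟨![0,0,1], ![1,1,2], ![0,1,1,1,2,2,2], mmap⟩ : Rep K (Fin 3) (Fin 3) (Fin 7)).vtx b = (⟨![0,0,1], ![1,1,2], ![0,1,1,1,2,2,2], mmap⟩ : Rep K (Fin 3) (Fin 3) (Fin 7)).tgt 2}) (f := fun _ => K) _ ⟨6, h51⟩ 1))
  have e3' := (congrArg ((⟨![0,0,1], ![1,1,2], ![0,1,1,1,2,2,2], mmap⟩ : Rep K (Fin 3) (Fin 3) (Fin 7)).mmap 2) (single_congr_dec
      (ι := {b : Fin 7 // (⟨![0,0,1], ![1,1,2], ![0,1,1,1,2,2,2], mmap⟩ : Rep K (Fin 3) (Fin 3) (Fin 7)).vtx b = (⟨![0,0,1], ![1,1,2], ![0,1,1,1,2,2,2], mmap⟩ : Rep K (Fin 3) (Fin 3) (Fin 7)).src 2}) (f := fun _ => K) _ ⟨3, rfl⟩ 1)).symm.trans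
    (ha7 rfl)
  have m3 : (⟨![0,0,1], ![1,1,2], ![0,1,1,1,2,2,2], mmap⟩ : Rep K (Fin 3) (Fin 3) (Fin 7)).mmap 2 (Pi.single (M := fun _ : {b : Fin 7 //
      (⟨![0,0,1], ![1,1,2], ![0,1,1,1,2,2,2], mmap⟩ : Rep K (Fin 3) (Fin 3) (Fin 7)).vtx b = 1} => K) ⟨3, rfl⟩ 1) = 0 := e3'
  have m1 : (⟨![0,0,1], ![1,1,2], ![0,1,1,1,2,2,2], mmap⟩ : Rep K (Fin 3) (Fin 3) (Fin 7)).mmap 2 (Pi.single (M := fun _ : {b : Fin 7 //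
      (⟨![0,0,1], ![1,1,2], ![0,1,1,1,2,2,2], mmap⟩ : Rep K (Fin 3) (Fin 3) (Fin 7)).vtx b = 1} => K) ⟨1, rfl⟩ 1) = Pi.single (M := fun _ : {b : Fin 7 //
      (⟨![0,0,1], ![1,1,2], ![0,1,1,1,2,2,2], mmap⟩ : Rep K (Fin 3) (Fin 3) (Fin 7)).vtx b = 2} => K) ⟨5, rfl⟩ 1 := e4'
  have m2 : (⟨![0,0,1], ![1,1,2], ![0,1,1,1,2,2,2], mmap⟩ : Rep K (Fin 3) (Fin 3) (Fin 7)).mmap 2 (Pi.single (M := fun _ : {b : Fin 7 //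
      (⟨![0,0,1], ![1,1,2], ![0,1,1,1,2,2,2], mmap⟩ : Rep K (Fin 3) (Fin 3) (Fin 7)).vtx b = 1} => K) ⟨2, rfl⟩ 1) = Pi.single (M := fun _ : {b : Fin 7 //
      (⟨![0,0,1], ![1,1,2], ![0,1,1,1,2,2,2], mmap⟩ : Rep K (Fin 3) (Fin 3) (Fin 7)).vtx b = 2} => K) ⟨6, rfl⟩ 1 := e5'
  have key0 : ∀ u vv : K, (⟨![0,0,1], ![1,1,2], ![0,1,1,1,2,2,2], mmap⟩ : Rep K (Fin 3) (Fin 3) (Fin 7)).mmap 2 (wA (⟨![0,0,1], ![1,1,2], ![0,1,1,1,2,2,2], mmap⟩ : Rep K (Fin 3) (Fin 3) (Fin 7)) u vv) =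
      u • Pi.single (M := fun _ : {b : Fin 7 // (⟨![0,0,1], ![1,1,2], ![0,1,1,1,2,2,2], mmap⟩ : Rep K (Fin 3) (Fin 3) (Fin 7)).vtx b = 2} => K) ⟨5, rfl⟩ 1 +
      vv • Pi.single (M := fun _ : {b : Fin 7 // (⟨![0,0,1], ![1,1,2], ![0,1,1,1,2,2,2], mmap⟩ : Rep K (Fin 3) (Fin 3) (Fin 7)).vtx b = 2} => K) ⟨6, rfl⟩ 1 := by
    intro u vv
    erw [decompA (R := (⟨![0,0,1], ![1,1,2], ![0,1,1,1,2,2,2], mmap⟩ : Rep K (Fin 3) (Fin 3) (Fin 7))) u vv rfl rfl rfl rfl, lin2.map_add, lin2.map_add, lin2.map_smul,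
      lin2.map_smul, m3, m1, m2, zero_add]
    rfl
  refine ⟨?_, ?_, ?_⟩
  · -- Part 1: membership in the cell
    rintro ⟨⟨r, s, u, vv⟩, hz⟩
    dsimp only at hz ⊢
    have key : (⟨![0,0,1], ![1,1,2], ![0,1,1,1,2,2,2], mmap⟩ : Rep K (Fin 3) (Fin 3) (Fin 7)).mmap 2 (wA (⟨![0,0,1], ![1,1,2], ![0,1,1,1,2,2,2], mmap⟩ : Rep K (Fin 3) (Fin 3) (Fin 7)) u vv) = u • wB (⟨![0,0,1], ![1,1,2], ![0,1,1,1,2,2,2], mmap⟩ : Rep K (Fin 3) (Fin 3) (Fin 7)) r + vv • wC (⟨![0,0,1], ![1,1,2], ![0,1,1,1,2,2,2], mmap⟩ : Rep K (Fin 3) (Fin 3) (Fin 7)) s := by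
      rw [key0 u vv]
      exact combB (R := (⟨![0,0,1], ![1,1,2], ![0,1,1,1,2,2,2], mmap⟩ : Rep K (Fin 3) (Fin 3) (Fin 7))) r s u vv hz rfl rfl rfl
    refine ⟨?_, ?_, ?_⟩
    · -- IsSubrep
      intro a
      rcases tri a with rfl | rfl | rfl
      · intro x hx
        have hx0 : x ∈ coneSubrep (⟨![0,0,1], ![1,1,2], ![0,1,1,1,2,2,2], mmap⟩ : Rep K (Fin 3) (Fin 3) (Fin 7)) r s u vv 0 := hx
        erw [cone0, Submodule.mem_bot] at hx0
        have hzz : (⟨![0,0,1], ![1,1,2], ![0,1,1,1,2,2,2], mmap⟩ : Rep K (Fin 3) (Fin 3) (Fin 7)).mmap 0 x = 0 := by rw [hx0]; exact (hlin 0).map_zero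
        exact (show (⟨![0,0,1], ![1,1,2], ![0,1,1,1,2,2,2], mmap⟩ : Rep K (Fin 3) (Fin 3) (Fin 7)).mmap 0 x ∈ coneSubrep (⟨![0,0,1], ![1,1,2], ![0,1,1,1,2,2,2], mmap⟩ : Rep K (Fin 3) (Fin 3) (Fin 7)) r s u vv 1 from by
          rw [hzz]; exact Submodule.zero_mem _)
      · intro x hx
        have hx0 : x ∈ coneSubrep (⟨![0,0,1], ![1,1,2], ![0,1,1,1,2,2,2], mmap⟩ : Rep K (Fin 3) (Fin 3) (Fin 7)) r s u vv 0 := hx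
        erw [cone0, Submodule.mem_bot] at hx0
        have hzz : (⟨![0,0,1], ![1,1,2], ![0,1,1,1,2,2,2], mmap⟩ : Rep K (Fin 3) (Fin 3) (Fin 7)).mmap 1 x = 0 := by rw [hx0]; exact (hlin 1).map_zero
        exact (show (⟨![0,0,1], ![1,1,2], ![0,1,1,1,2,2,2], mmap⟩ : Rep K (Fin 3) (Fin 3) (Fin 7)).mmap 1 x ∈ coneSubrep (⟨![0,0,1], ![1,1,2], ![0,1,1,1,2,2,2], mmap⟩ : Rep K (Fin 3) (Fin 3) (Fin 7)) r s u vv 1 from by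
          rw [hzz]; exact Submodule.zero_mem _)
      · intro x hx
        have hx0 : x ∈ coneSubrep (⟨![0,0,1], ![1,1,2], ![0,1,1,1,2,2,2], mmap⟩ : Rep K (Fin 3) (Fin 3) (Fin 7)) r s u vv 1 := hx
        erw [cone1] at hx0; replace hx0 := (Submodule.mem_span_singleton (M := {b : Fin 7 // (⟨![0,0,1], ![1,1,2], ![0,1,1,1,2,2,2], mmap⟩ : Rep K (Fin 3) (Fin 3) (Fin 7)).vtx b = 1} → K)).mp hx0
        obtain ⟨c, rfl⟩ := hx0
        exact (show (⟨![0,0,1], ![1,1,2], ![0,1,1,1,2,2,2], mmap⟩ : Rep K (Fin 3) (Fin 3) (Fin 7)).mmap 2 (c • wA (⟨![0,0,1], ![1,1,2], ![0,1,1,1,2,2,2], mmap⟩ : Rep K (Fin 3) (Fin 3) (Fin 7)) u vv) ∈ coneSubrep (⟨![0,0,1], ![1,1,2], ![0,1,1,1,2,2,2], mmap⟩ : Rep K (Fin 3) (Fin 3) (Fin 7)) r s u vv 2 from by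
          rw [cone2]; erw [lin2.map_smul, key]
          exact Submodule.smul_mem _ _ (Submodule.add_mem _
            (Submodule.smul_mem _ _ (Submodule.subset_span (M := {b : Fin 7 // (⟨![0,0,1], ![1,1,2], ![0,1,1,1,2,2,2], mmap⟩ : Rep K (Fin 3) (Fin 3) (Fin 7)).vtx b = 2} → K) (Set.mem_insert _ _)))
            (Submodule.smul_mem _ _ (Submodule.subset_span (M := {b : Fin 7 // (⟨![0,0,1], ![1,1,2], ![0,1,1,1,2,2,2], mmap⟩ : Rep K (Fin 3) (Fin 3) (Fin 7)).vtx b = 2} → K) (Set.mem_insert_of_mem _ rfl)))))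
    · -- finrank
      intro p
      rcases tri p with rfl | rfl | rfl
      · rw [cone0, finrank_bot, Finset.filter_congr_decidable]
        show 0 = (Finset.filter (fun b => (![0,1,1,1,2,2,2] : Fin 7 → Fin 3) b = 0)
          ({3,5,6} : Finset (Fin 7))).card
        decide
      · rw [cone1, finrankA (R := (⟨![0,0,1], ![1,1,2], ![0,1,1,1,2,2,2], mmap⟩ : Rep K (Fin 3) (Fin 3) (Fin 7))) u vv rfl, Finset.filter_congr_decidable]
        show 1 = (Finset.filter (fun b => (![0,1,1,1,2,2,2] : Fin 7 → Fin 3) b = 1)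
          ({3,5,6} : Finset (Fin 7))).card
        decide
      · rw [cone2, finrankBC (R := (⟨![0,0,1], ![1,1,2], ![0,1,1,1,2,2,2], mmap⟩ : Rep K (Fin 3) (Fin 3) (Fin 7))) r s rfl rfl, Finset.filter_congr_decidable]
        show 2 = (Finset.filter (fun b => (![0,1,1,1,2,2,2] : Fin 7 → Fin 3) b = 2)
          ({3,5,6} : Finset (Fin 7))).card
        decide
    · -- InCell
      intro p
      rcases tri p with rfl | rfl | rfl
      · haveI hemp : IsEmpty {b : Fin 7 // b ∈ ({3,5,6} : Finset (Fin 7)) ∧ (⟨![0,0,1], ![1,1,2], ![0,1,1,1,2,2,2], mmap⟩ : Rep K (Fin 3) (Fin 3) (Fin 7)).vtx b = 0} := by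
          constructor
          rintro ⟨b, hb, hv⟩
          exact mem0β (R := (⟨![0,0,1], ![1,1,2], ![0,1,1,1,2,2,2], mmap⟩ : Rep K (Fin 3) (Fin 3) (Fin 7))) rfl b hb hv
        refine ⟨fun b0 => (hemp.false b0).elim, fun b0 => (hemp.false b0).elim,
          fun b0 _ _ _ => (hemp.false b0).elim, ?_⟩
        rw [cone0, Set.range_eq_empty, Submodule.span_empty]
      · refine ⟨fun _ => wA (⟨![0,0,1], ![1,1,2], ![0,1,1,1,2,2,2], mmap⟩ : Rep K (Fin 3) (Fin 3) (Fin 7)) u vv, ?_, ?_, ?_⟩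
        · rintro ⟨b0v, hb0m, hb0v⟩
          have e3 : b0v = 3 := mem1β (R := (⟨![0,0,1], ![1,1,2], ![0,1,1,1,2,2,2], mmap⟩ : Rep K (Fin 3) (Fin 3) (Fin 7))) rfl b0v hb0m hb0v
          subst e3
          rfl
        · rintro ⟨b0v, hb0m, hb0v⟩ ⟨b1v, hb1⟩ hne hnlt
          have e3 : b0v = 3 := mem1β (R := (⟨![0,0,1], ![1,1,2], ![0,1,1,1,2,2,2], mmap⟩ : Rep K (Fin 3) (Fin 3) (Fin 7))) rfl b0v hb0m hb0v
          subst e3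
          rcases mem1v (R := (⟨![0,0,1], ![1,1,2], ![0,1,1,1,2,2,2], mmap⟩ : Rep K (Fin 3) (Fin 3) (Fin 7))) rfl b1v hb1 with rfl | rfl | rfl
          · exact absurd ⟨show (1 : Fin 7) < 3 by decide,
              show (1 : Fin 7) ∉ ({3,5,6} : Finset (Fin 7)) by decide⟩ hnlt
          · exact absurd ⟨show (2 : Fin 7) < 3 by decide,
              show (2 : Fin 7) ∉ ({3,5,6} : Finset (Fin 7)) by decide⟩ hnlt
          · exact absurd rfl hne
        · rw [cone1]
          haveI : Nonempty {b : Fin 7 // b ∈ ({3,5,6} : Finset (Fin 7)) ∧ (⟨![0,0,1], ![1,1,2], ![0,1,1,1,2,2,2], mmap⟩ : Rep K (Fin 3) (Fin 3) (Fin 7)).vtx b = 1} :=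
            ⟨⟨3, by decide, rfl⟩⟩
          rw [Set.range_const]
      · refine ⟨fun b0 => if b0.val.val = 5 then wB (⟨![0,0,1], ![1,1,2], ![0,1,1,1,2,2,2], mmap⟩ : Rep K (Fin 3) (Fin 3) (Fin 7)) r else wC (⟨![0,0,1], ![1,1,2], ![0,1,1,1,2,2,2], mmap⟩ : Rep K (Fin 3) (Fin 3) (Fin 7)) s, ?_, ?_, ?_⟩
        · rintro ⟨b0v, hb0m, hb0v⟩
          rcases mem2β (R := (⟨![0,0,1], ![1,1,2], ![0,1,1,1,2,2,2], mmap⟩ : Rep K (Fin 3) (Fin 3) (Fin 7))) rfl b0v hb0m hb0v with rfl | rfl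
          · rfl
          · rfl
        · rintro ⟨b0v, hb0m, hb0v⟩ ⟨b1v, hb1⟩ hne hnlt
          rcases mem2β (R := (⟨![0,0,1], ![1,1,2], ![0,1,1,1,2,2,2], mmap⟩ : Rep K (Fin 3) (Fin 3) (Fin 7))) rfl b0v hb0m hb0v with rfl | rfl <;>
            rcases mem2v (R := (⟨![0,0,1], ![1,1,2], ![0,1,1,1,2,2,2], mmap⟩ : Rep K (Fin 3) (Fin 3) (Fin 7))) rfl b1v hb1 with rfl | rfl | rfl
          · exact absurd ⟨show (4 : Fin 7) < 5 by decide,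
              show (4 : Fin 7) ∉ ({3,5,6} : Finset (Fin 7)) by decide⟩ hnlt
          · exact absurd rfl hne
          · rfl
          · exact absurd ⟨show (4 : Fin 7) < 6 by decide,
              show (4 : Fin 7) ∉ ({3,5,6} : Finset (Fin 7)) by decide⟩ hnlt
          · rfl
          · exact absurd rfl hne
        · rw [cone2]
          congr 1
          ext x
          constructor
          · rintro (rfl | rfl)
            · exact ⟨⟨5, by decide, rfl⟩, rfl⟩
            · exact ⟨⟨6, by decide, rfl⟩, rfl⟩
          · rintro ⟨⟨b0v, hb0m, hb0v⟩, rfl⟩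
            rcases mem2β (R := (⟨![0,0,1], ![1,1,2], ![0,1,1,1,2,2,2], mmap⟩ : Rep K (Fin 3) (Fin 3) (Fin 7))) rfl b0v hb0m hb0v with rfl | rfl
            · exact Set.mem_insert _ _
            · exact Set.mem_insert_of_mem _ rfl
  · -- Part 2: injectivity
    rintro ⟨⟨r, s, u, vv⟩, hz⟩ ⟨⟨r', s', u', vv'⟩, hz'⟩ h
    dsimp only at h
    have h1 := congrFun h 1
    have h2 := congrFun h 2
    rw [cone1, cone1] at h1
    rw [cone2, cone2] at h2
    have mA : wA (⟨![0,0,1], ![1,1,2], ![0,1,1,1,2,2,2], mmap⟩ : Rep K (Fin 3) (Fin 3) (Fin 7)) u vv ∈ Submodule.span K {wA (⟨![0,0,1], ![1,1,2], ![0,1,1,1,2,2,2], mmap⟩ : Rep K (Fin 3) (Fin 3) (Fin 7)) u' vv'} := by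
      rw [← h1]; exact Submodule.mem_span_singleton_self _
    obtain ⟨c, hc⟩ := Submodule.mem_span_singleton.mp mA
    have ec3 : c * 1 = (1 : K) := congrFun hc ⟨3, rfl⟩
    have ec1 : c * u' = u := congrFun hc ⟨1, rfl⟩
    have ec2 : c * vv' = vv := congrFun hc ⟨2, rfl⟩
    rw [mul_one] at ec3
    subst ec3
    rw [one_mul] at ec1 ec2
    have mB : wB (⟨![0,0,1], ![1,1,2], ![0,1,1,1,2,2,2], mmap⟩ : Rep K (Fin 3) (Fin 3) (Fin 7)) r ∈ Submodule.span K {wB (⟨![0,0,1], ![1,1,2], ![0,1,1,1,2,2,2], mmap⟩ : Rep K (Fin 3) (Fin 3) (Fin 7)) r', wC (⟨![0,0,1], ![1,1,2], ![0,1,1,1,2,2,2], mmap⟩ : Rep K (Fin 3) (Fin 3) (Fin 7)) s'} := by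
      rw [← h2]; exact Submodule.subset_span (Set.mem_insert _ _)
    obtain ⟨a, b, hab⟩ := Submodule.mem_span_pair.mp mB
    have eb5 : a * 1 + b * 0 = (1 : K) := congrFun hab ⟨5, rfl⟩
    have eb6 : a * 0 + b * 1 = (0 : K) := congrFun hab ⟨6, rfl⟩
    have eb4 : a * r' + b * s' = r := congrFun hab ⟨4, rfl⟩
    rw [mul_one, mul_zero, add_zero] at eb5
    rw [mul_zero, mul_one, zero_add] at eb6
    have mC : wC (⟨![0,0,1], ![1,1,2], ![0,1,1,1,2,2,2], mmap⟩ : Rep K (Fin 3) (Fin 3) (Fin 7)) s ∈ Submodule.span K {wB (⟨![0,0,1], ![1,1,2], ![0,1,1,1,2,2,2], mmap⟩ : Rep K (Fin 3) (Fin 3) (Fin 7)) r', wC (⟨![0,0,1], ![1,1,2], ![0,1,1,1,2,2,2], mmap⟩ : Rep K (Fin 3) (Fin 3) (Fin 7)) s'} := by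
      rw [← h2]; exact Submodule.subset_span (Set.mem_insert_of_mem _ rfl)
    obtain ⟨a', b', hab'⟩ := Submodule.mem_span_pair.mp mC
    have ed5 : a' * 1 + b' * 0 = (0 : K) := congrFun hab' ⟨5, rfl⟩
    have ed6 : a' * 0 + b' * 1 = (1 : K) := congrFun hab' ⟨6, rfl⟩
    have ed4 : a' * r' + b' * s' = s := congrFun hab' ⟨4, rfl⟩
    rw [mul_one, mul_zero, add_zero] at ed5
    rw [mul_zero, mul_one, zero_add] at ed6
    apply Subtype.ext
    simp only [Prod.mk.injEq]
    refine ⟨?_, ?_, ?_, ?_⟩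
    · rw [← eb4, eb5, eb6, one_mul, zero_mul, add_zero]
    · rw [← ed4, ed5, ed6, one_mul, zero_mul, zero_add]
    · exact ec1.symm
    · exact ec2.symm
  · -- Part 3: surjectivity
    intro W hW
    obtain ⟨hsub, hrank, hcell⟩ := hW
    obtain ⟨v0, -, -, hW0⟩ := hcell 0
    obtain ⟨v1, h1a, h1b, hW1⟩ := hcell 1
    obtain ⟨v2, h2a, h2b, hW2⟩ := hcell 2
    haveI hemp : IsEmpty {b : Fin 7 // b ∈ ({3,5,6} : Finset (Fin 7)) ∧ (⟨![0,0,1], ![1,1,2], ![0,1,1,1,2,2,2], mmap⟩ : Rep K (Fin 3) (Fin 3) (Fin 7)).vtx b = 0} := by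
      constructor
      rintro ⟨b, hb, hv⟩
      exact mem0β (R := (⟨![0,0,1], ![1,1,2], ![0,1,1,1,2,2,2], mmap⟩ : Rep K (Fin 3) (Fin 3) (Fin 7))) rfl b hb hv
    have hW0' : W 0 = ⊥ := by rw [hW0, Set.range_eq_empty, Submodule.span_empty]
    have hb3 : (3 : Fin 7) ∈ ({3,5,6} : Finset (Fin 7)) ∧ (⟨![0,0,1], ![1,1,2], ![0,1,1,1,2,2,2], mmap⟩ : Rep K (Fin 3) (Fin 3) (Fin 7)).vtx 3 = 1 := ⟨by decide, rfl⟩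
    have hb5 : (5 : Fin 7) ∈ ({3,5,6} : Finset (Fin 7)) ∧ (⟨![0,0,1], ![1,1,2], ![0,1,1,1,2,2,2], mmap⟩ : Rep K (Fin 3) (Fin 3) (Fin 7)).vtx 5 = 2 := ⟨by decide, rfl⟩
    have hb6 : (6 : Fin 7) ∈ ({3,5,6} : Finset (Fin 7)) ∧ (⟨![0,0,1], ![1,1,2], ![0,1,1,1,2,2,2], mmap⟩ : Rep K (Fin 3) (Fin 3) (Fin 7)).vtx 6 = 2 := ⟨by decide, rfl⟩
    set u : K := v1 ⟨3, hb3⟩ ⟨1, rfl⟩ with hu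
    set vv : K := v1 ⟨3, hb3⟩ ⟨2, rfl⟩ with hvv
    set r : K := v2 ⟨5, hb5⟩ ⟨4, rfl⟩ with hr
    set s : K := v2 ⟨6, hb6⟩ ⟨4, rfl⟩ with hs
    have hvb3 : v1 ⟨3, hb3⟩ = wA (⟨![0,0,1], ![1,1,2], ![0,1,1,1,2,2,2], mmap⟩ : Rep K (Fin 3) (Fin 3) (Fin 7)) u vv := by
      funext b
      obtain ⟨bv, hb⟩ := b
      rcases mem1v (R := (⟨![0,0,1], ![1,1,2], ![0,1,1,1,2,2,2], mmap⟩ : Rep K (Fin 3) (Fin 3) (Fin 7))) rfl bv hb with rfl | rfl | rfl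
      · rfl
      · rfl
      · exact h1a ⟨3, hb3⟩
    have hvb5 : v2 ⟨5, hb5⟩ = wB (⟨![0,0,1], ![1,1,2], ![0,1,1,1,2,2,2], mmap⟩ : Rep K (Fin 3) (Fin 3) (Fin 7)) r := by
      funext b
      obtain ⟨bv, hb⟩ := b
      rcases mem2v (R := (⟨![0,0,1], ![1,1,2], ![0,1,1,1,2,2,2], mmap⟩ : Rep K (Fin 3) (Fin 3) (Fin 7))) rfl bv hb with rfl | rfl | rfl
      · rfl
      · exact h2a ⟨5, hb5⟩
      · exact h2b ⟨5, hb5⟩ ⟨6, hb⟩ (show (6 : Fin 7) ≠ 5 by decide)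
          (show ¬((6 : Fin 7) < 5 ∧ (6 : Fin 7) ∉ ({3,5,6} : Finset (Fin 7))) by decide)
    have hvb6 : v2 ⟨6, hb6⟩ = wC (⟨![0,0,1], ![1,1,2], ![0,1,1,1,2,2,2], mmap⟩ : Rep K (Fin 3) (Fin 3) (Fin 7)) s := by
      funext b
      obtain ⟨bv, hb⟩ := b
      rcases mem2v (R := (⟨![0,0,1], ![1,1,2], ![0,1,1,1,2,2,2], mmap⟩ : Rep K (Fin 3) (Fin 3) (Fin 7))) rfl bv hb with rfl | rfl | rfl
      · rfl
      · exact h2b ⟨6, hb6⟩ ⟨5, hb⟩ (show (5 : Fin 7) ≠ 6 by decide)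
          (show ¬((5 : Fin 7) < 6 ∧ (5 : Fin 7) ∉ ({3,5,6} : Finset (Fin 7))) by decide)
      · exact h2a ⟨6, hb6⟩
    have hr1 : Set.range v1 = {wA (⟨![0,0,1], ![1,1,2], ![0,1,1,1,2,2,2], mmap⟩ : Rep K (Fin 3) (Fin 3) (Fin 7)) u vv} := by
      ext x
      constructor
      · rintro ⟨i, rfl⟩
        have : i = ⟨3, hb3⟩ := Subtype.ext (mem1β (R := (⟨![0,0,1], ![1,1,2], ![0,1,1,1,2,2,2], mmap⟩ : Rep K (Fin 3) (Fin 3) (Fin 7))) rfl i.val i.prop.1 i.prop.2)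
        rw [this, hvb3]
        rfl
      · intro hx
        rw [Set.mem_singleton_iff] at hx
        exact ⟨⟨3, hb3⟩, hvb3.trans hx.symm⟩
    have hr2 : Set.range v2 = {wB (⟨![0,0,1], ![1,1,2], ![0,1,1,1,2,2,2], mmap⟩ : Rep K (Fin 3) (Fin 3) (Fin 7)) r, wC (⟨![0,0,1], ![1,1,2], ![0,1,1,1,2,2,2], mmap⟩ : Rep K (Fin 3) (Fin 3) (Fin 7)) s} := by
      ext x
      constructor
      · rintro ⟨i, rfl⟩
        rcases mem2β (R := (⟨![0,0,1], ![1,1,2], ![0,1,1,1,2,2,2], mmap⟩ : Rep K (Fin 3) (Fin 3) (Fin 7))) rfl i.val i.prop.1 i.prop.2 with h5 | h6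
        · have : i = ⟨5, hb5⟩ := Subtype.ext h5
          rw [this, hvb5]; exact Set.mem_insert _ _
        · have : i = ⟨6, hb6⟩ := Subtype.ext h6
          rw [this, hvb6]; exact Set.mem_insert_of_mem _ rfl
      · rintro (rfl | rfl)
        · exact ⟨⟨5, hb5⟩, hvb5⟩
        · exact ⟨⟨6, hb6⟩, hvb6⟩
    have hW1' : W 1 = Submodule.span K {wA (⟨![0,0,1], ![1,1,2], ![0,1,1,1,2,2,2], mmap⟩ : Rep K (Fin 3) (Fin 3) (Fin 7)) u vv} := by rw [hW1, hr1]
    have hW2' : W 2 = Submodule.span K {wB (⟨![0,0,1], ![1,1,2], ![0,1,1,1,2,2,2], mmap⟩ : Rep K (Fin 3) (Fin 3) (Fin 7)) r, wC (⟨![0,0,1], ![1,1,2], ![0,1,1,1,2,2,2], mmap⟩ : Rep K (Fin 3) (Fin 3) (Fin 7)) s} := by rw [hW2, hr2]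
    have hmem : (⟨![0,0,1], ![1,1,2], ![0,1,1,1,2,2,2], mmap⟩ : Rep K (Fin 3) (Fin 3) (Fin 7)).mmap 2 (wA (⟨![0,0,1], ![1,1,2], ![0,1,1,1,2,2,2], mmap⟩ : Rep K (Fin 3) (Fin 3) (Fin 7)) u vv) ∈ W 2 := by
      have hx1 : wA (⟨![0,0,1], ![1,1,2], ![0,1,1,1,2,2,2], mmap⟩ : Rep K (Fin 3) (Fin 3) (Fin 7)) u vv ∈ W 1 := by
        rw [hW1']; exact Submodule.mem_span_singleton_self _
      exact hsub 2 (wA (⟨![0,0,1], ![1,1,2], ![0,1,1,1,2,2,2], mmap⟩ : Rep K (Fin 3) (Fin 3) (Fin 7)) u vv) hx1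
    rw [hW2', key0 u vv] at hmem
    obtain ⟨a, b, hab⟩ := (Submodule.mem_span_pair (M := {b : Fin 7 // (⟨![0,0,1], ![1,1,2], ![0,1,1,1,2,2,2], mmap⟩ : Rep K (Fin 3) (Fin 3) (Fin 7)).vtx b = 2} → K)).mp hmem
    have eg5 : a * 1 + b * 0 = u * 1 + vv * 0 := congrFun hab ⟨5, rfl⟩
    have eg6 : a * 0 + b * 1 = u * 0 + vv * 1 := congrFun hab ⟨6, rfl⟩
    have eg4 : a * r + b * s = u * 0 + vv * 0 := congrFun hab ⟨4, rfl⟩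
    rw [mul_one, mul_zero, add_zero, mul_one, mul_zero, add_zero] at eg5
    rw [mul_zero, mul_one, zero_add, mul_zero, mul_one, zero_add] at eg6
    rw [mul_zero, mul_zero, add_zero] at eg4
    have hrel : r * u + s * vv = 0 := by
      rw [← eg5, ← eg6]
      linear_combination eg4
    refine ⟨⟨(r, s, u, vv), hrel⟩, ?_⟩
    funext p
    rcases tri p with rfl | rfl | rfl
    · rw [cone0, hW0']
    · rw [cone1, hW1']
    · rw [cone2, hW2']
end
end
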